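/- arXiv:0904.0068 — 6 statements merged into one kernel-verified Lean document; each statement's English description precedes it below -/
import Mathlib

section
/- Let m, n be positive integers with n > 2·(2√(2m) + 1)², let ξ < 1, θ ≥ 1, σ ≥ 0, ρ ≥ 0, let s be a positive integer, and let A be an m×n real matrix satisfying VSG_s(ξ,θ,ρ,σ). Then s ≤ 2√(2m) + 1. -/
set_option maxHeartbeats 1000000


open Finset

noncomputable def normS1 {n : ℕ} (s : ℕ) (x : Fin n → ℝ) : ℝ :=
  (Finset.univ.powerset.filter (fun J : Finset (Fin n) => J.card ≤ s)).sup'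
    ⟨∅, by simp⟩ (fun J => ∑ i ∈ J, |x i|)

noncomputable def dualNorm {m : ℕ} (N : (Fin m → ℝ) → ℝ) (v : Fin m → ℝ) : ℝ :=
  sSup {r : ℝ | ∃ x : Fin m → ℝ, N x ≤ 1 ∧ r = ∑ k, v k * x k}

def IsNorm {m : ℕ} (N : (Fin m → ℝ) → ℝ) : Prop :=
  (∀ x y, N (x + y) ≤ N x + N y) ∧ (∀ (c : ℝ) (x), N (c • x) = |c| * N x) ∧
  (∀ x, N x = 0 → x = 0)

def SemiGood {m n : ℕ} (A : Matrix (Fin m) (Fin n) ℝ) (Pplus : Finset (Fin n)) (s : ℕ) : Prop :=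
  ∀ w : Fin n → ℝ,
    (Finset.univ.filter (fun i => w i ≠ 0)).card ≤ s →
    (∀ i ∈ Pplus, 0 ≤ w i) →
    ∀ z : Fin n → ℝ, A.mulVec z = A.mulVec w → (∀ i ∈ Pplus, 0 ≤ z i) →
      (∑ i, |z i|) ≤ (∑ i, |w i|) → z = w

def SGCond {m n : ℕ} (A : Matrix (Fin m) (Fin n) ℝ) (Pplus : Finset (Fin n))
    (s : ℕ) (ξ θ : ℝ) : Prop :=
  ∀ x : Fin n → ℝ, A.mulVec x = 0 → ∀ J : Finset (Fin n), J.card ≤ s →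
    ∑ i ∈ J ∩ Pplus, x i + ∑ i ∈ J ∩ Pplusᶜ, |x i| ≤
      ξ * (∑ i ∈ Pplusᶜ \ J, |x i| + ∑ i ∈ Pplus \ J, max (-x i) (θ * x i))

def SGbCond {m n : ℕ} (A : Matrix (Fin m) (Fin n) ℝ) (Pplus : Finset (Fin n))
    (s : ℕ) (ξ θ β : ℝ) (N : (Fin m → ℝ) → ℝ) : Prop :=
  ∀ x : Fin n → ℝ, ∀ J : Finset (Fin n), J.card ≤ s →
    ∑ i ∈ J ∩ Pplus, x i + ∑ i ∈ J ∩ Pplusᶜ, |x i| ≤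
      β * N (A.mulVec x) +
        ξ * (∑ i ∈ Pplusᶜ \ J, |x i| + ∑ i ∈ Pplus \ J, max (-x i) (θ * x i))

def SGbCondSign {m n : ℕ} (A : Matrix (Fin m) (Fin n) ℝ) (Pplus : Finset (Fin n))
    (s : ℕ) (ξ β : ℝ) (N : (Fin m → ℝ) → ℝ) : Prop :=
  ∀ J : Finset (Fin n), J.card ≤ s →
    ∀ x : Fin n → ℝ, (∀ i ∈ Pplus \ J, x i ≤ 0) →
      ∑ i ∈ J ∩ Pplus, x i + ∑ i ∈ J ∩ Pplusᶜ, |x i| ≤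
        β * N (A.mulVec x) + ξ * ∑ i ∈ Jᶜ, |x i|

noncomputable def Phi {n : ℕ} (Pplus : Finset (Fin n)) (s : ℕ) (ξ θ : ℝ)
    (x : Fin n → ℝ) : ℝ :=
  normS1 s (fun i => if i ∈ Pplus then (1 + θ * ξ) * max (x i) 0 else (1 + ξ) * |x i|)

def VSGCert {m n : ℕ} (A : Matrix (Fin m) (Fin n) ℝ) (Pplus : Finset (Fin n))
    (s : ℕ) (ξ θ ρ σ : ℝ) (N : (Fin m → ℝ) → ℝ)
    (Y : Matrix (Fin m) (Fin n) ℝ) (v : Fin m → ℝ) : Prop :=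
  (∀ i, Phi Pplus s ξ θ (fun j => -((1 - Y.transpose * A : Matrix (Fin n) (Fin n) ℝ) j i)) + (A.transpose.mulVec v) i ≤ ξ) ∧
  (∀ i ∉ Pplus, Phi Pplus s ξ θ (fun j => (1 - Y.transpose * A : Matrix (Fin n) (Fin n) ℝ) j i) - (A.transpose.mulVec v) i ≤ ξ) ∧
  (∀ i ∈ Pplus, Phi Pplus s ξ θ (fun j => (1 - Y.transpose * A : Matrix (Fin n) (Fin n) ℝ) j i) - (A.transpose.mulVec v) i ≤ θ * ξ) ∧
  (∀ i, dualNorm N (fun k => Y k i) ≤ σ) ∧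
  dualNorm N v ≤ ρ

def VSG {m n : ℕ} (A : Matrix (Fin m) (Fin n) ℝ) (Pplus : Finset (Fin n))
    (s : ℕ) (ξ θ ρ σ : ℝ) (N : (Fin m → ℝ) → ℝ) : Prop :=
  ∃ (Y : Matrix (Fin m) (Fin n) ℝ) (v : Fin m → ℝ), VSGCert A Pplus s ξ θ ρ σ N Y v

def VSGbarCert {m n : ℕ} (A : Matrix (Fin m) (Fin n) ℝ) (Pplus : Finset (Fin n))
    (s : ℕ) (ξ σ θ : ℝ) (N : (Fin m → ℝ) → ℝ) (Y : Matrix (Fin m) (Fin n) ℝ) : Prop :=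
  (∀ i, dualNorm N (fun k => Y k i) ≤ σ) ∧
  (∀ i ∉ Pplus, ∀ j, |(1 - Y.transpose * A : Matrix (Fin n) (Fin n) ℝ) i j| ≤ ξ / ((1 + ξ) * s)) ∧
  (∀ i ∈ Pplus, ∀ j ∉ Pplus,
    -(ξ / ((1 + ξ * θ) * s)) ≤ (1 - Y.transpose * A : Matrix (Fin n) (Fin n) ℝ) i j ∧
      (1 - Y.transpose * A : Matrix (Fin n) (Fin n) ℝ) i j ≤ ξ / ((1 + ξ * θ) * s)) ∧
  (∀ i ∈ Pplus, ∀ j ∈ Pplus,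
    -(ξ / ((1 + ξ * θ) * s)) ≤ (1 - Y.transpose * A : Matrix (Fin n) (Fin n) ℝ) i j ∧
      (1 - Y.transpose * A : Matrix (Fin n) (Fin n) ℝ) i j ≤ ξ * θ / ((1 + ξ * θ) * s))

lemma normS1_ge {n : ℕ} (s : ℕ) (x : Fin n → ℝ) (J : Finset (Fin n)) (hJ : J.card ≤ s) :
    ∑ j ∈ J, |x j| ≤ normS1 s x := by
  apply Finset.le_sup' (fun J => ∑ i ∈ J, |x i|)
  exact Finset.mem_filter.mpr ⟨Finset.mem_powerset.mpr (Finset.subset_univ J), hJ⟩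

lemma normS1_nonneg {n : ℕ} (s : ℕ) (x : Fin n → ℝ) : 0 ≤ normS1 s x := by
  have := normS1_ge s x ∅ (Nat.zero_le s)
  simpa using this

lemma sqSumLemma {ι : Type*} [DecidableEq ι] (F : Finset ι) (x : ι → ℝ)
    (hx : ∀ j ∈ F, 0 ≤ x j) (t : ℕ) (ht : 1 ≤ t) (hF : (F.card : ℝ) ≤ (t : ℝ) ^ 2)
    (π : ℝ) (hsum : ∀ T ⊆ F, T.card ≤ t → ∑ j ∈ T, x j ≤ π) :
    ∑ j ∈ F, (x j) ^ 2 ≤ 2 * π ^ 2 := by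
  have hπ0 : 0 ≤ π := by simpa using hsum ∅ (Finset.empty_subset F) (by simp)
  have ht0 : (0:ℝ) < t := by exact_mod_cast ht
  set T := F.filter (fun j => π / t < x j) with hT
  have hTsub : T ⊆ F := Finset.filter_subset _ _
  have hTcard : T.card ≤ t := by
    by_contra hcon
    push_neg at hcon
    obtain ⟨T', hT'sub, hT'card⟩ := Finset.exists_subset_card_eq (le_of_lt hcon)
    have hne : T'.Nonempty := Finset.card_pos.mp (by omega)
    have hlt : ∑ j ∈ T', (π / t) < ∑ j ∈ T', x j := by
      refine Finset.sum_lt_sum_of_nonempty hne fun j hj => ?_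
      exact (Finset.mem_filter.mp (hT'sub hj)).2
    have hconst : ∑ _j ∈ T', (π / t) = π := by
      rw [Finset.sum_const, hT'card, nsmul_eq_mul]
      field_simp
    have := hsum T' (hT'sub.trans hTsub) (le_of_eq hT'card)
    rw [hconst] at hlt
    linarith
  have h1 : ∑ j ∈ T, (x j) ^ 2 ≤ π ^ 2 := by
    have hs1 : ∑ j ∈ T, x j ≤ π := hsum T hTsub hTcard
    have hnn : ∀ j ∈ T, 0 ≤ x j := fun j hj => hx j (hTsub hj)
    calc ∑ j ∈ T, (x j) ^ 2 ≤ (∑ j ∈ T, x j) ^ 2 := Finset.sum_sq_le_sq_sum_of_nonneg hnn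
      _ ≤ π ^ 2 := by
          apply pow_le_pow_left₀ (Finset.sum_nonneg hnn) hs1
  have h2 : ∑ j ∈ F \ T, (x j) ^ 2 ≤ π ^ 2 := by
    have hbound : ∀ j ∈ F \ T, (x j) ^ 2 ≤ (π / t) ^ 2 := by
      intro j hj
      have hjF := (Finset.mem_sdiff.mp hj).1
      have hjnT := (Finset.mem_sdiff.mp hj).2
      have : ¬ (π / t < x j) := fun h => hjnT (Finset.mem_filter.mpr ⟨hjF, h⟩)
      push_neg at this
      exact pow_le_pow_left₀ (hx j hjF) this 2
    calc ∑ j ∈ F \ T, (x j) ^ 2 ≤ ∑ _j ∈ F \ T, (π / t) ^ 2 := Finset.sum_le_sum hbound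
      _ = (F \ T).card * (π / t) ^ 2 := by rw [Finset.sum_const, nsmul_eq_mul]
      _ ≤ (F.card : ℝ) * (π / t) ^ 2 := by
          have : ((F \ T).card : ℝ) ≤ (F.card : ℝ) := by
            exact_mod_cast Finset.card_le_card (Finset.sdiff_subset)
          exact mul_le_mul_of_nonneg_right this (sq_nonneg _)
      _ ≤ (t:ℝ)^2 * (π / t) ^ 2 := mul_le_mul_of_nonneg_right hF (sq_nonneg _)
      _ = π ^ 2 := by field_simp
  have hsplit : ∑ j ∈ F, (x j) ^ 2 = ∑ j ∈ F \ T, (x j) ^ 2 + ∑ j ∈ T, (x j) ^ 2 :=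
    (Finset.sum_sdiff hTsub).symm
  linarith

lemma traceCS {ι : Type*} [Fintype ι] [DecidableEq ι] {m' : ℕ}
    (c : ι → EuclideanSpace ℝ ι) (W : Submodule ℝ (EuclideanSpace ℝ ι))
    (hW : Module.finrank ℝ W ≤ m') (hc : ∀ i, c i ∈ W) :
    (∑ i, c i i) ^ 2 ≤ (m' : ℝ) * ∑ i, ∑ x, (c i x) ^ 2 := by
  classical
  set r := Module.finrank ℝ W with hr
  let b := stdOrthonormalBasis ℝ W
  let u : Fin r → EuclideanSpace ℝ ι := fun j => (b j : EuclideanSpace ℝ ι)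
  have huo : ∀ j l, (∑ x, u j x * u l x) = if j = l then (1:ℝ) else 0 := by
    intro j l
    have h := b.orthonormal
    rw [orthonormal_iff_ite] at h
    have h2 := h j l
    have : (inner ℝ (u j) (u l) : ℝ) = ∑ x, u j x * u l x := by
      rw [PiLp.inner_apply]; simp [RCLike.inner_apply]
      exact Finset.sum_congr rfl fun x _ => mul_comm _ _
    rw [← this]
    rw [← Submodule.coe_inner] at this
    simpa [u, Submodule.coe_inner] using h2
  have hexp : ∀ i, c i = ∑ j, (∑ x, u j x * c i x) • u j := by
    intro i
    have h1 : ∑ j, b.repr ⟨c i, hc i⟩ j • b j = (⟨c i, hc i⟩ : W) := b.sum_repr _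
    have h2 : ∀ j, b.repr ⟨c i, hc i⟩ j = ∑ x, u j x * c i x := by
      intro j
      rw [b.repr_apply_apply]
      rw [Submodule.coe_inner]
      rw [PiLp.inner_apply]; simp [RCLike.inner_apply, u]
      exact Finset.sum_congr rfl fun x _ => mul_comm _ _
    calc c i = ((⟨c i, hc i⟩ : W) : EuclideanSpace ℝ ι) := rfl
    _ = ((∑ j, b.repr ⟨c i, hc i⟩ j • b j : W) : EuclideanSpace ℝ ι) := by rw [h1]
    _ = ∑ j, (∑ x, u j x * c i x) • u j := by
        push_cast [Submodule.coe_sum]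
        exact Finset.sum_congr rfl fun j _ => by rw [h2 j]
  -- trace rewrite
  have htr : (∑ i, c i i) = ∑ p : ι × ι, (∑ j, u j p.1 * u j p.2) * (c p.2 p.1) := by
    have key : ∀ i : ι, c i i = ∑ x, (∑ j, u j x * u j i) * c i x := by
      intro i
      conv_lhs => rw [hexp i]
      rw [WithLp.ofLp_sum, Finset.sum_apply]
      simp only [PiLp.smul_apply, smul_eq_mul]
      calc ∑ j, (∑ x, u j x * c i x) * u j i
          = ∑ j, ∑ x, u j x * c i x * u j i := by
            exact Finset.sum_congr rfl fun j _ => Finset.sum_mul _ _ _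
        _ = ∑ x, ∑ j, u j x * c i x * u j i := Finset.sum_comm
        _ = ∑ x, (∑ j, u j x * u j i) * c i x := by
            refine Finset.sum_congr rfl fun x _ => ?_
            rw [Finset.sum_mul]
            exact Finset.sum_congr rfl fun j _ => by ring
    calc (∑ i, c i i) = ∑ i, ∑ x, (∑ j, u j x * u j i) * c i x :=
          Finset.sum_congr rfl fun i _ => key i
      _ = ∑ x, ∑ i, (∑ j, u j x * u j i) * c i x := Finset.sum_comm
      _ = ∑ p : ι × ι, (∑ j, u j p.1 * u j p.2) * (c p.2 p.1) := by
          rw [Fintype.sum_prod_type]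
  -- Cauchy--Schwarz
  have hcs := Finset.sum_mul_sq_le_sq_mul_sq Finset.univ
      (fun p : ι × ι => ∑ j, u j p.1 * u j p.2) (fun p : ι × ι => c p.2 p.1)
  have hP : (∑ p : ι × ι, (∑ j, u j p.1 * u j p.2) ^ 2) = (r : ℝ) := by
    have expand : ∀ p : ι × ι, (∑ j, u j p.1 * u j p.2) ^ 2
        = ∑ j, ∑ l, (u j p.1 * u j p.2) * (u l p.1 * u l p.2) := by
      intro p
      rw [sq, Finset.sum_mul_sum]
    calc (∑ p : ι × ι, (∑ j, u j p.1 * u j p.2) ^ 2)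
        = ∑ p : ι × ι, ∑ j, ∑ l, (u j p.1 * u j p.2) * (u l p.1 * u l p.2) :=
          Finset.sum_congr rfl fun p _ => expand p
      _ = ∑ j, ∑ l, ∑ p : ι × ι, (u j p.1 * u j p.2) * (u l p.1 * u l p.2) := by
          rw [Finset.sum_comm]
          exact Finset.sum_congr rfl fun j _ => Finset.sum_comm
      _ = ∑ j, ∑ l : Fin r, (∑ x, u j x * u l x) * (∑ y, u j y * u l y) := by
          refine Finset.sum_congr rfl fun j _ => Finset.sum_congr rfl fun l _ => ?_
          rw [Fintype.sum_prod_type, Finset.sum_mul_sum]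
          refine Finset.sum_congr rfl fun x _ => Finset.sum_congr rfl fun y _ => by ring
      _ = ∑ j, ∑ l : Fin r, (if j = l then (1:ℝ) else 0) * (if j = l then (1:ℝ) else 0) := by
          refine Finset.sum_congr rfl fun j _ => Finset.sum_congr rfl fun l _ => ?_
          rw [huo j l]
      _ = (r : ℝ) := by simp
  rw [htr]
  have hsq : (∑ p : ι × ι, (c p.2 p.1) ^ 2) = ∑ i, ∑ x, (c i x) ^ 2 := by
    rw [Fintype.sum_prod_type]
    rw [Finset.sum_comm]
  calc (∑ p : ι × ι, (∑ j, u j p.1 * u j p.2) * (c p.2 p.1)) ^ 2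
      ≤ (∑ p : ι × ι, (∑ j, u j p.1 * u j p.2) ^ 2) * (∑ p : ι × ι, (c p.2 p.1) ^ 2) := hcs
    _ = (r : ℝ) * (∑ i, ∑ x, (c i x) ^ 2) := by rw [hP, hsq]
    _ ≤ (m' : ℝ) * (∑ i, ∑ x, (c i x) ^ 2) := by
        have h0 : (0:ℝ) ≤ ∑ i, ∑ x, (c i x) ^ 2 :=
          Finset.sum_nonneg fun i _ => Finset.sum_nonneg fun x _ => sq_nonneg _
        have : (r:ℝ) ≤ (m':ℝ) := by exact_mod_cast hW
        exact mul_le_mul_of_nonneg_right this h0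

lemma core {m n : ℕ} (Y A : Matrix (Fin m) (Fin n) ℝ) (K : Finset (Fin n)) (s : ℕ)
    (hs : 2 ≤ s) (hk : (K.card : ℝ) ≤ ((s : ℝ) - 1) ^ 2 + 1)
    (γ : ℝ) (hγ1 : γ < 1) (p q : Fin n → ℝ)
    (hp0 : ∀ i ∈ K, 0 ≤ p i) (hq0 : ∀ i ∈ K, 0 ≤ q i)
    (hpq : ∀ i ∈ K, p i + q i ≤ γ)
    (hpos : ∀ i ∈ K, ∀ J ⊆ K, J.card ≤ s →
      ∑ j ∈ J, max ((1 - Y.transpose * A : Matrix (Fin n) (Fin n) ℝ) j i) 0 ≤ p i)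
    (hneg : ∀ i ∈ K, ∀ J ⊆ K, J.card ≤ s →
      ∑ j ∈ J, max (-((1 - Y.transpose * A : Matrix (Fin n) (Fin n) ℝ) j i)) 0 ≤ q i) :
    (K.card : ℝ) ≤ 5 * m := by
  classical
  set B : Matrix (Fin n) (Fin n) ℝ := Y.transpose * A with hB
  set D : Matrix (Fin n) (Fin n) ℝ := (1 - Y.transpose * A : Matrix (Fin n) (Fin n) ℝ) with hD
  have hDB : ∀ j i, D j i = (if j = i then (1:ℝ) else 0) - B j i := by
    intro j i
    simp [hD, hB, Matrix.sub_apply, Matrix.one_apply]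
  set a : Fin n → ℝ := fun i => 1 - D i i with ha
  set Q : Fin n → ℝ := fun i => ∑ j ∈ K.erase i, (D j i) ^ 2 with hQdef
  have hBaa : ∀ i, B i i = a i := by
    intro i
    have h1 := hDB i i
    rw [if_pos rfl] at h1
    show B i i = 1 - D i i
    linarith
  have key : ∀ i ∈ K, 0 < a i ∧ Q i ≤ 4 * (a i) ^ 2 := by
    intro i hi
    have hsing : ({i} : Finset (Fin n)) ⊆ K := Finset.singleton_subset_iff.mpr hi
    have hc1 : ({i} : Finset (Fin n)).card ≤ s := by simp; omega
    have hdp : max (D i i) 0 ≤ p i := by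
      have h := hpos i hi {i} hsing hc1
      simpa using h
    have hdq : max (-(D i i)) 0 ≤ q i := by
      have h := hneg i hi {i} hsing hc1
      simpa using h
    have hdle : D i i ≤ p i := le_trans (le_max_left _ _) hdp
    have hqi := hq0 i hi
    have hpi := hp0 i hi
    have hpqi := hpq i hi
    have hapos : 0 < a i := by
      simp only [ha]
      linarith
    set πp : ℝ := p i - max (D i i) 0 with hπp
    set πm : ℝ := q i - max (-(D i i)) 0 with hπm
    have hπp0 : 0 ≤ πp := by rw [hπp]; linarith [hdp]
    have hπm0 : 0 ≤ πm := by rw [hπm]; linarith [hdq]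
    have hπpa : πp ≤ a i := by
      have h1 : D i i ≤ max (D i i) 0 := le_max_left _ _
      rw [hπp]; simp only [ha]; linarith
    have hπma : πm ≤ a i := by
      have h1 : (0:ℝ) ≤ max (-(D i i)) 0 := le_max_right _ _
      rw [hπm]; simp only [ha]; linarith
    have hcarderase : ((K.erase i).card : ℝ) ≤ ((s - 1 : ℕ) : ℝ) ^ 2 := by
      have h1 : (K.erase i).card = K.card - 1 := Finset.card_erase_of_mem hi
      have h2 : 1 ≤ K.card := Finset.card_pos.mpr ⟨i, hi⟩
      have h3 : ((K.erase i).card : ℝ) = (K.card : ℝ) - 1 := by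
        rw [h1]; rw [Nat.cast_sub h2]; norm_num
      have h4 : ((s - 1 : ℕ) : ℝ) = (s : ℝ) - 1 := by
        rw [Nat.cast_sub (by omega)]; norm_num
      rw [h3, h4]; linarith
    have hsub : ∀ (f : Fin n → ℝ) (π : ℝ),
        (∀ Jx : Finset (Fin n), Jx ⊆ K → Jx.card ≤ s → ∑ j ∈ Jx, max (f j) 0 ≤ π + max (f i) 0) →
        (∀ T ⊆ K.erase i, T.card ≤ s - 1 → ∑ j ∈ T, max (f j) 0 ≤ π) := by
      intro f π hf T hT hTc
      have hiT : i ∉ T := fun h => (Finset.mem_erase.mp (hT h)).1 rfl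
      have hJsub : insert i T ⊆ K := by
        intro x hx
        rcases Finset.mem_insert.mp hx with h | h
        · rwa [h]
        · exact (Finset.erase_subset i K) (hT h)
      have hJc : (insert i T).card ≤ s := by
        rw [Finset.card_insert_of_notMem hiT]; omega
      have h := hf (insert i T) hJsub hJc
      rw [Finset.sum_insert hiT] at h
      linarith
    have hSp : ∑ j ∈ K.erase i, (max (D j i) 0) ^ 2 ≤ 2 * πp ^ 2 := by
      apply sqSumLemma (K.erase i) (fun j => max (D j i) 0)
        (fun j _ => le_max_right _ _) (s - 1) (by omega) hcarderase πp
      apply hsub (fun j => D j i) πp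
      intro J hJ hJc
      have h := hpos i hi J hJ hJc
      rw [hπp]
      calc ∑ j ∈ J, max (D j i) 0 ≤ p i := h
        _ = p i - max (D i i) 0 + max (D i i) 0 := by ring
    have hSm : ∑ j ∈ K.erase i, (max (-(D j i)) 0) ^ 2 ≤ 2 * πm ^ 2 := by
      apply sqSumLemma (K.erase i) (fun j => max (-(D j i)) 0)
        (fun j _ => le_max_right _ _) (s - 1) (by omega) hcarderase πm
      apply hsub (fun j => -(D j i)) πm
      intro J hJ hJc
      have h := hneg i hi J hJ hJc
      rw [hπm]
      calc ∑ j ∈ J, max (-(D j i)) 0 ≤ q i := h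
        _ = q i - max (-(D i i)) 0 + max (-(D i i)) 0 := by ring
    have hsq : ∀ (x : ℝ), x ^ 2 = (max x 0) ^ 2 + (max (-x) 0) ^ 2 := by
      intro x
      rcases le_total x 0 with h | h
      · rw [max_eq_right h, max_eq_left (by linarith)]; ring
      · rw [max_eq_left h, max_eq_right (by linarith)]; ring
    have hQsplit : Q i = ∑ j ∈ K.erase i, (max (D j i) 0) ^ 2
        + ∑ j ∈ K.erase i, (max (-(D j i)) 0) ^ 2 := by
      rw [hQdef]
      simp only []
      rw [← Finset.sum_add_distrib]
      exact Finset.sum_congr rfl fun j _ => hsq (D j i)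
    refine ⟨hapos, ?_⟩
    have hπp2 : πp ^ 2 ≤ a i ^ 2 := by nlinarith
    have hπm2 : πm ^ 2 ≤ a i ^ 2 := by nlinarith
    rw [hQsplit]; nlinarith
  -- set up traceCS
  set lam : Fin n → ℝ := fun i => a i / (a i ^ 2 + Q i) with hlam
  set ρ : Fin n → ℝ := fun i => a i ^ 2 / (a i ^ 2 + Q i) with hρ
  have hQ0 : ∀ i, 0 ≤ Q i := fun i => Finset.sum_nonneg fun j _ => sq_nonneg _
  have hden : ∀ i ∈ K, 0 < a i ^ 2 + Q i := by
    intro i hi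
    have h1 := (key i hi).1
    have h2 := hQ0 i
    positivity
  let ψ : (Fin m → ℝ) →ₗ[ℝ] EuclideanSpace ℝ ↥K :=
    { toFun := fun z => WithLp.toLp 2 (fun x => ∑ l, Y l (↑x : Fin n) * z l)
      map_add' := by
        intro z w
        ext x
        simp [mul_add, Finset.sum_add_distrib]
      map_smul' := by
        intro cc z
        ext x
        simp only [smul_eq_mul, RingHom.id_apply, PiLp.smul_apply, PiLp.toLp_apply]
        rw [Finset.mul_sum]
        exact Finset.sum_congr rfl fun l _ => by simp [Pi.smul_apply]; ring }
  set W : Submodule ℝ (EuclideanSpace ℝ ↥K) := LinearMap.range ψ with hW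
  have hWrank : Module.finrank ℝ W ≤ m := by
    have h1 := LinearMap.finrank_range_le ψ
    rwa [Module.finrank_fintype_fun_eq_card, Fintype.card_fin] at h1
  set c : ↥K → EuclideanSpace ℝ ↥K := fun i => WithLp.toLp 2 (fun x => lam ↑i * B (↑x : Fin n) (↑i : Fin n))
    with hc
  have hcW : ∀ i, c i ∈ W := by
    intro i
    refine ⟨fun l => lam ↑i * A l ↑i, ?_⟩
    ext x
    show (∑ l, Y l (↑x : Fin n) * (lam ↑i * A l ↑i)) = lam ↑i * B (↑x) (↑i)
    rw [hB, Matrix.mul_apply, Finset.mul_sum]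
    exact Finset.sum_congr rfl fun l _ => by rw [Matrix.transpose_apply]; ring
  have hmain := traceCS c W hWrank hcW
  have hdiag : ∀ i : ↥K, c i i = ρ ↑i := by
    intro i
    show lam ↑i * B ↑i ↑i = ρ ↑i
    rw [hBaa, hlam, hρ]
    simp only []
    rw [div_mul_eq_mul_div, sq]
  have hcol : ∀ i : ↥K, ∑ x : ↥K, (c i x) ^ 2 = ρ ↑i := by
    intro i
    have h1 : ∀ x : ↥K, (c i x) ^ 2 = lam ↑i ^ 2 * (B (↑x) (↑i)) ^ 2 := by
      intro x; show (lam ↑i * B ↑x ↑i)^2 = _; ring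
    have h2 : ∑ x : ↥K, (B (↑x : Fin n) (↑i : Fin n)) ^ 2 = a ↑i ^ 2 + Q ↑i := by
      have h3 : ∑ x : ↥K, (B (↑x : Fin n) (↑i : Fin n)) ^ 2
          = ∑ j ∈ K, (B j ↑i) ^ 2 := Finset.sum_coe_sort K (fun j => (B j ↑i) ^ 2)
      rw [h3]
      rw [← Finset.add_sum_erase K _ i.2]
      congr 1
      · rw [hBaa]
      · refine Finset.sum_congr rfl fun j hj => ?_
        have hne : j ≠ ↑i := (Finset.mem_erase.mp hj).1
        have h4 : D j ↑i = -B j ↑i := by rw [hDB]; simp [hne]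
        rw [show B j (↑i : Fin n) = -D j ↑i by rw [h4]; ring]
        ring
    calc ∑ x : ↥K, (c i x) ^ 2 = ∑ x : ↥K, lam ↑i ^ 2 * (B (↑x) (↑i)) ^ 2 :=
          Finset.sum_congr rfl fun x _ => h1 x
      _ = lam ↑i ^ 2 * (a ↑i ^ 2 + Q ↑i) := by rw [← Finset.mul_sum, h2]
      _ = ρ ↑i := by
          rw [hlam, hρ]
          simp only []
          have h5 := hden ↑i i.2
          field_simp
  have e1 : ∑ i : ↥K, c i i = ∑ j ∈ K, ρ j := by
    rw [Finset.sum_congr rfl (fun i _ => hdiag i)]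
    exact Finset.sum_coe_sort K ρ
  have e2 : ∑ i : ↥K, ∑ x : ↥K, (c i x) ^ 2 = ∑ j ∈ K, ρ j := by
    rw [Finset.sum_congr rfl (fun i _ => hcol i)]
    exact Finset.sum_coe_sort K ρ
  rw [e1, e2] at hmain
  set S : ℝ := ∑ j ∈ K, ρ j with hS
  have hρlb : ∀ j ∈ K, (1:ℝ)/5 ≤ ρ j := by
    intro j hj
    obtain ⟨hap, hqb⟩ := key j hj
    rw [hρ]
    simp only []
    rw [div_le_div_iff₀ (by norm_num) (hden j hj)]
    nlinarith [hQ0 j]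
  have hSlb : (K.card : ℝ) / 5 ≤ S := by
    have h := Finset.sum_le_sum hρlb
    rw [Finset.sum_const] at h
    simp only [nsmul_eq_mul] at h
    calc (K.card : ℝ)/5 = K.card * (1/5) := by ring
      _ ≤ S := h
  have hSm' : S ≤ m := by
    rcases eq_or_lt_of_le (le_trans (div_nonneg (Nat.cast_nonneg _) (by norm_num) : (0:ℝ) ≤ (K.card:ℝ)/5) hSlb : (0:ℝ) ≤ S) with h | h
    · rw [← h]; positivity
    · nlinarith
  linarith

lemma Phi_nonneg {n : ℕ} (Pplus : Finset (Fin n)) (s : ℕ) (ξ θ : ℝ) (x : Fin n → ℝ) :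
    0 ≤ Phi Pplus s ξ θ x := normS1_nonneg _ _

lemma Phi_ge_plus {n : ℕ} (Pplus : Finset (Fin n)) (s : ℕ) (ξ θ : ℝ) (hθξ : 0 ≤ θ * ξ)
    (x : Fin n → ℝ) (J : Finset (Fin n)) (hJP : J ⊆ Pplus) (hJc : J.card ≤ s) :
    ∑ j ∈ J, (1 + θ * ξ) * max (x j) 0 ≤ Phi Pplus s ξ θ x := by
  have h := normS1_ge s
    (fun i => if i ∈ Pplus then (1 + θ * ξ) * max (x i) 0 else (1 + ξ) * |x i|) J hJc
  refine le_trans (le_of_eq ?_) h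
  refine Finset.sum_congr rfl fun j hj => ?_
  show (1 + θ * ξ) * max (x j) 0
      = abs (if j ∈ Pplus then (1 + θ * ξ) * max (x j) 0 else (1 + ξ) * abs (x j))
  rw [if_pos (hJP hj)]
  rw [abs_of_nonneg (mul_nonneg (by linarith : (0:ℝ) ≤ 1 + θ * ξ) (le_max_right _ _))]

lemma Phi_ge_compl {n : ℕ} (Pplus : Finset (Fin n)) (s : ℕ) (ξ θ : ℝ) (hξ : 0 ≤ ξ)
    (x : Fin n → ℝ) (J : Finset (Fin n)) (hJP : J ⊆ Pplusᶜ) (hJc : J.card ≤ s) :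
    ∑ j ∈ J, (1 + ξ) * |x j| ≤ Phi Pplus s ξ θ x := by
  have h := normS1_ge s
    (fun i => if i ∈ Pplus then (1 + θ * ξ) * max (x i) 0 else (1 + ξ) * |x i|) J hJc
  refine le_trans (le_of_eq ?_) h
  refine Finset.sum_congr rfl fun j hj => ?_
  show (1 + ξ) * abs (x j)
      = abs (if j ∈ Pplus then (1 + θ * ξ) * max (x j) 0 else (1 + ξ) * abs (x j))
  rw [if_neg (Finset.mem_compl.mp (hJP hj))]
  rw [abs_of_nonneg (mul_nonneg (by linarith : (0:ℝ) ≤ 1 + ξ) (abs_nonneg _))]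

theorem stmt9 {m n : ℕ} (hm : 0 < m) (hn : 0 < n)
    (A : Matrix (Fin m) (Fin n) ℝ) (Pplus : Finset (Fin n))
    (s : ℕ) (hs : 0 < s) (ξ θ ρ σ : ℝ)
    (hξ : ξ < 1) (hθ : 1 ≤ θ) (hσ : 0 ≤ σ) (hρ : 0 ≤ ρ)
    (N : (Fin m → ℝ) → ℝ) (hN : IsNorm N)
    (hbig : (n : ℝ) > 2 * (2 * Real.sqrt (2 * m) + 1) ^ 2)
    (h : VSG A Pplus s ξ θ ρ σ N) :
    (s : ℝ) ≤ 2 * Real.sqrt (2 * m) + 1 := by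
  by_contra hcon
  push_neg at hcon
  obtain ⟨Y, v, hc1, hc2, hc3, _hy, _hv⟩ := h
  set r : Fin n → ℝ := A.transpose.mulVec v with hr
  have hsq2m : Real.sqrt (2 * m) ^ 2 = 2 * m := Real.sq_sqrt (by positivity)
  have hsqnn : (0:ℝ) ≤ Real.sqrt (2 * m) := Real.sqrt_nonneg _
  have hsq1 : (1:ℝ) ≤ Real.sqrt (2 * m) := by
    have h1 : (1:ℝ) ≤ 2 * m := by
      have : (1:ℝ) ≤ (m:ℝ) := by exact_mod_cast hm
      linarith
    nlinarith [hsq2m, hsqnn]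
  -- ξ is nonnegative
  have hξ0 : 0 ≤ ξ := by
    by_contra hneg'
    push_neg at hneg'
    set i0 : Fin n := ⟨0, hn⟩
    have h1 := hc1 i0
    have hP1 := Phi_nonneg Pplus s ξ θ
      (fun j => -((1 - Y.transpose * A : Matrix (Fin n) (Fin n) ℝ) j i0))
    have hP2 := Phi_nonneg Pplus s ξ θ
      (fun j => ((1 - Y.transpose * A : Matrix (Fin n) (Fin n) ℝ) j i0))
    by_cases hi0 : i0 ∈ Pplus
    · have h3 := hc3 i0 hi0
      have hθξ' : θ * ξ ≤ ξ := by nlinarith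
      linarith
    · have h2 := hc2 i0 hi0
      linarith
  have hθξ0 : 0 ≤ θ * ξ := mul_nonneg (by linarith) hξ0
  have hw1 : (0:ℝ) < 1 + θ * ξ := by linarith
  have hw2 : (0:ℝ) < 1 + ξ := by linarith
  have hs2 : 2 ≤ s := by
    have h1 : (2:ℝ) ≤ (s:ℝ) := by linarith
    exact_mod_cast h1
  -- (s-1)^2 ≥ 8m+1
  have h8 : (8 * m : ℝ) + 1 ≤ ((s:ℝ) - 1) ^ 2 := by
    have h1 : 2 * Real.sqrt (2 * m) < (s:ℝ) - 1 := by linarith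
    have h2 : (2 * Real.sqrt (2 * m)) ^ 2 < ((s:ℝ) - 1) ^ 2 := by
      apply pow_lt_pow_left₀ h1 (by positivity)
      norm_num
    have h3 : (2 * Real.sqrt (2 * m)) ^ 2 = 8 * m := by
      rw [mul_pow, hsq2m]; ring
    have h4 : (8 * m : ℝ) < (((s - 1 : ℕ) ^ 2 : ℕ) : ℝ) := by
      push_cast [Nat.cast_sub (by omega : 1 ≤ s)]
      linarith
    have h5 : 8 * m < (s - 1) ^ 2 := by exact_mod_cast h4
    have h6 : 8 * m + 1 ≤ (s - 1) ^ 2 := h5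
    have h7 : ((8 * m + 1 : ℕ) : ℝ) ≤ (((s - 1 : ℕ) ^ 2 : ℕ) : ℝ) := by exact_mod_cast h6
    push_cast [Nat.cast_sub (by omega : 1 ≤ s)] at h7
    linarith
  -- one of the two classes is large
  have hclass : 8 * m + 1 ≤ Pplus.card ∨ 8 * m + 1 ≤ Pplusᶜ.card := by
    by_contra hx
    push_neg at hx
    obtain ⟨hx1, hx2⟩ := hx
    have hsum : Pplus.card + Pplusᶜ.card = n := by
      rw [Finset.card_add_card_compl, Fintype.card_fin]
    have hn16 : n ≤ 16 * m := by omega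
    have hn16' : (n : ℝ) ≤ 16 * m := by exact_mod_cast hn16
    nlinarith [hsq2m, hsqnn]
  have habs : ∀ (K : Finset (Fin n)), K.card = 8 * m + 1 →
      ((K ⊆ Pplus) ∨ (K ⊆ Pplusᶜ)) → False := by
    intro K hKcard hKsub
    have hk : (K.card : ℝ) ≤ ((s:ℝ) - 1) ^ 2 + 1 := by
      rw [hKcard]; push_cast; linarith
    have hfinal : (K.card : ℝ) ≤ 5 * m := by
      rcases hKsub with hKP | hKP
      · -- K inside Pplus
        refine core Y A K s hs2 hk ((1 + θ) * ξ / (1 + θ * ξ)) ?_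
          (fun i => (θ * ξ + r i) / (1 + θ * ξ)) (fun i => (ξ - r i) / (1 + θ * ξ))
          ?_ ?_ ?_ ?_ ?_
        · rw [div_lt_one hw1]; nlinarith
        · intro i hi
          have h3 := hc3 i (hKP hi)
          have hP := Phi_nonneg Pplus s ξ θ
            (fun j => ((1 - Y.transpose * A : Matrix (Fin n) (Fin n) ℝ) j i))
          apply div_nonneg _ (le_of_lt hw1)
          linarith
        · intro i hi
          have h1 := hc1 i
          have hP := Phi_nonneg Pplus s ξ θ
            (fun j => -((1 - Y.transpose * A : Matrix (Fin n) (Fin n) ℝ) j i))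
          apply div_nonneg _ (le_of_lt hw1)
          linarith
        · intro i hi
          rw [← add_div, div_le_div_iff₀ hw1 hw1]
          ring_nf
          nlinarith []
        · intro i hi J hJ hJc
          have h3 := hc3 i (hKP hi)
          have hPhi := Phi_ge_plus Pplus s ξ θ hθξ0
            (fun j => ((1 - Y.transpose * A : Matrix (Fin n) (Fin n) ℝ) j i)) J
            (hJ.trans hKP) hJc
          rw [le_div_iff₀ hw1]
          calc (∑ j ∈ J, max ((1 - Y.transpose * A : Matrix (Fin n) (Fin n) ℝ) j i) 0) * (1 + θ * ξ)
              = ∑ j ∈ J, (1 + θ * ξ) * max ((1 - Y.transpose * A : Matrix (Fin n) (Fin n) ℝ) j i) 0 := by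
                rw [Finset.sum_mul]
                exact Finset.sum_congr rfl fun j _ => by ring
            _ ≤ Phi Pplus s ξ θ (fun j => ((1 - Y.transpose * A : Matrix (Fin n) (Fin n) ℝ) j i)) := hPhi
            _ ≤ θ * ξ + r i := by linarith
        · intro i hi J hJ hJc
          have h1 := hc1 i
          have hPhi := Phi_ge_plus Pplus s ξ θ hθξ0
            (fun j => -((1 - Y.transpose * A : Matrix (Fin n) (Fin n) ℝ) j i)) J
            (hJ.trans hKP) hJc
          rw [le_div_iff₀ hw1]
          calc (∑ j ∈ J, max (-((1 - Y.transpose * A : Matrix (Fin n) (Fin n) ℝ) j i)) 0) * (1 + θ * ξ)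
              = ∑ j ∈ J, (1 + θ * ξ) * max (-((1 - Y.transpose * A : Matrix (Fin n) (Fin n) ℝ) j i)) 0 := by
                rw [Finset.sum_mul]
                exact Finset.sum_congr rfl fun j _ => by ring
            _ ≤ Phi Pplus s ξ θ (fun j => -((1 - Y.transpose * A : Matrix (Fin n) (Fin n) ℝ) j i)) := hPhi
            _ ≤ ξ - r i := by linarith
      · -- K inside complement of Pplus
        refine core Y A K s hs2 hk (2 * ξ / (1 + ξ)) ?_
          (fun i => (ξ + r i) / (1 + ξ)) (fun i => (ξ - r i) / (1 + ξ))
          ?_ ?_ ?_ ?_ ?_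
        · rw [div_lt_one hw2]; linarith
        · intro i hi
          have h2 := hc2 i (Finset.mem_compl.mp (hKP hi))
          have hP := Phi_nonneg Pplus s ξ θ
            (fun j => ((1 - Y.transpose * A : Matrix (Fin n) (Fin n) ℝ) j i))
          apply div_nonneg _ (le_of_lt hw2)
          linarith
        · intro i hi
          have h1 := hc1 i
          have hP := Phi_nonneg Pplus s ξ θ
            (fun j => -((1 - Y.transpose * A : Matrix (Fin n) (Fin n) ℝ) j i))
          apply div_nonneg _ (le_of_lt hw2)
          linarith
        · intro i hi
          rw [← add_div, div_le_div_iff₀ hw2 hw2]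
          ring_nf
          nlinarith []
        · intro i hi J hJ hJc
          have h2 := hc2 i (Finset.mem_compl.mp (hKP hi))
          have hPhi := Phi_ge_compl Pplus s ξ θ hξ0
            (fun j => ((1 - Y.transpose * A : Matrix (Fin n) (Fin n) ℝ) j i)) J
            (hJ.trans hKP) hJc
          rw [le_div_iff₀ hw2]
          calc (∑ j ∈ J, max ((1 - Y.transpose * A : Matrix (Fin n) (Fin n) ℝ) j i) 0) * (1 + ξ)
              ≤ ∑ j ∈ J, (1 + ξ) * |(1 - Y.transpose * A : Matrix (Fin n) (Fin n) ℝ) j i| := by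
                rw [Finset.sum_mul]
                refine Finset.sum_le_sum fun j _ => ?_
                rw [mul_comm]
                apply mul_le_mul_of_nonneg_left _ (le_of_lt hw2)
                exact max_le (le_abs_self _) (abs_nonneg _)
            _ ≤ Phi Pplus s ξ θ (fun j => ((1 - Y.transpose * A : Matrix (Fin n) (Fin n) ℝ) j i)) := hPhi
            _ ≤ ξ + r i := by linarith
        · intro i hi J hJ hJc
          have h1 := hc1 i
          have hPhi := Phi_ge_compl Pplus s ξ θ hξ0
            (fun j => -((1 - Y.transpose * A : Matrix (Fin n) (Fin n) ℝ) j i)) J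
            (hJ.trans hKP) hJc
          rw [le_div_iff₀ hw2]
          calc (∑ j ∈ J, max (-((1 - Y.transpose * A : Matrix (Fin n) (Fin n) ℝ) j i)) 0) * (1 + ξ)
              ≤ ∑ j ∈ J, (1 + ξ) * |-((1 - Y.transpose * A : Matrix (Fin n) (Fin n) ℝ) j i)| := by
                rw [Finset.sum_mul]
                refine Finset.sum_le_sum fun j _ => ?_
                rw [mul_comm]
                apply mul_le_mul_of_nonneg_left _ (le_of_lt hw2)
                exact max_le (le_abs_self _) (abs_nonneg _)
            _ ≤ Phi Pplus s ξ θ (fun j => -((1 - Y.transpose * A : Matrix (Fin n) (Fin n) ℝ) j i)) := hPhi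
            _ ≤ ξ - r i := by linarith
    rw [hKcard] at hfinal
    push_cast at hfinal
    have hm1 : (1:ℝ) ≤ (m:ℝ) := by exact_mod_cast hm
    linarith
  rcases hclass with hcl | hcl
  · obtain ⟨K, hKsub, hKcard⟩ := Finset.exists_subset_card_eq hcl
    exact habs K hKcard (Or.inl hKsub)
  · obtain ⟨K, hKsub, hKcard⟩ := Finset.exists_subset_card_eq hcl
    exact habs K hKcard (Or.inr hKsub)
end

section
/- Let Z be a ν×ν real matrix of rank m, let s > 1 be a positive integer, and let δ_i ∈ (0,1], 1 ≤ i ≤ ν, be such that the columns C_i of the matrix I_ν − Z satisfy ‖C_i‖_{s,1} ≤ 1 − δ_i for every i. If ν > (2√(2m) + 1)², then s ≤ 2√(2m) + 1. -/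
open Finset

lemma my_sq_add_le (a b : ℝ) : (a + b) ^ 2 ≤ 2 * a ^ 2 + 2 * b ^ 2 := by
  nlinarith [sq_nonneg (a - b)]

lemma myrank_add_le {n : ℕ} (A B : Matrix (Fin n) (Fin n) ℝ) :
    (A + B).rank ≤ A.rank + B.rank := by
  classical
  have h : LinearMap.range (A + B).mulVecLin ≤
      LinearMap.range A.mulVecLin ⊔ LinearMap.range B.mulVecLin := by
    rintro y ⟨x, rfl⟩
    rw [Matrix.mulVecLin_add]
    exact Submodule.add_mem_sup ⟨x, rfl⟩ ⟨x, rfl⟩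
  have h2 : (A + B).rank ≤ Module.finrank ℝ
      ↥(LinearMap.range A.mulVecLin ⊔ LinearMap.range B.mulVecLin) :=
    Submodule.finrank_mono h
  exact h2.trans (Submodule.finrank_add_le_finrank_add_finrank _ _)

lemma mytrace_sq_le {n : ℕ} (M : Matrix (Fin n) (Fin n) ℝ) (hM : M.IsHermitian) :
    M.trace ^ 2 ≤ (M.rank : ℝ) * (M * M).trace := by
  classical
  set U : Matrix (Fin n) (Fin n) ℝ := (hM.eigenvectorUnitary : Matrix (Fin n) (Fin n) ℝ) with hUdef
  set ev : Fin n → ℝ := hM.eigenvalues with hevdef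
  have hunit : star U * U = 1 := Matrix.mem_unitaryGroup_iff'.mp hM.eigenvectorUnitary.2
  have hD : (Matrix.diagonal (RCLike.ofReal ∘ hM.eigenvalues) : Matrix (Fin n) (Fin n) ℝ)
      = Matrix.diagonal ev := by congr 1
  have hspec : M = U * Matrix.diagonal ev * star U := by
    rw [← hD]; exact hM.spectral_theorem
  have htr : M.trace = ∑ i, ev i := by
    conv_lhs => rw [hspec]
    rw [Matrix.trace_mul_cycle, hunit, Matrix.one_mul, Matrix.trace_diagonal]
  have hMM : M * M = U * Matrix.diagonal (fun i => ev i ^ 2) * star U := by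
    rw [hspec]
    calc U * Matrix.diagonal ev * star U * (U * Matrix.diagonal ev * star U)
        = U * (Matrix.diagonal ev * (star U * U * (Matrix.diagonal ev * star U))) := by
          simp only [Matrix.mul_assoc]
      _ = U * Matrix.diagonal (fun i => ev i ^ 2) * star U := by
          rw [hunit, Matrix.one_mul]
          simp only [← Matrix.mul_assoc, Matrix.diagonal_mul_diagonal]
          congr 2
          ext i
          ring
  have htr2 : (M * M).trace = ∑ i, ev i ^ 2 := by
    rw [hMM, Matrix.trace_mul_cycle, hunit, Matrix.one_mul, Matrix.trace_diagonal]
  have hrank : M.rank = (Finset.univ.filter (fun i => ev i ≠ 0)).card := by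
    rw [hM.rank_eq_card_non_zero_eigs]
    simp [Fintype.card_subtype, hevdef]
  rw [htr, htr2, hrank]
  have h1 : ∑ i, ev i = ∑ i ∈ Finset.univ.filter (fun i => ev i ≠ 0), ev i :=
    (Finset.sum_filter_ne_zero _).symm
  rw [h1]
  calc (∑ i ∈ Finset.univ.filter (fun i => ev i ≠ 0), ev i) ^ 2
      ≤ (Finset.univ.filter (fun i => ev i ≠ 0)).card *
        ∑ i ∈ Finset.univ.filter (fun i => ev i ≠ 0), ev i ^ 2 :=
        sq_sum_le_card_mul_sum_sq
    _ ≤ (Finset.univ.filter (fun i => ev i ≠ 0)).card * ∑ i, ev i ^ 2 := by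
        apply mul_le_mul_of_nonneg_left _ (Nat.cast_nonneg _)
        exact Finset.sum_le_sum_of_subset_of_nonneg (Finset.subset_univ _)
          (fun i _ _ => sq_nonneg _)

set_option maxHeartbeats 2000000 in
theorem stmt10 {ν : ℕ} (Z : Matrix (Fin ν) (Fin ν) ℝ) (m : ℕ) (hrank : Z.rank = m)
    (s : ℕ) (hs : 1 < s) (δ : Fin ν → ℝ)
    (hδ : ∀ i, 0 < δ i ∧ δ i ≤ 1)
    (hcol : ∀ i, normS1 s (fun j => (1 - Z : Matrix (Fin ν) (Fin ν) ℝ) j i) ≤ 1 - δ i)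
    (hν : (ν : ℝ) > (2 * Real.sqrt (2 * m) + 1) ^ 2) :
    (s : ℝ) ≤ 2 * Real.sqrt (2 * m) + 1 := by
  by_contra hcon
  push_neg at hcon
  classical
  have hm0 : (0:ℝ) ≤ 2 * m := by positivity
  have hsq : Real.sqrt (2 * m) ^ 2 = 2 * m := Real.sq_sqrt hm0
  have hsqnn : 0 ≤ Real.sqrt (2 * m) := Real.sqrt_nonneg _
  -- lower bound instances of normS1
  have hnorm : ∀ i (J : Finset (Fin ν)), J.card ≤ s →
      ∑ j ∈ J, |(1 - Z : Matrix (Fin ν) (Fin ν) ℝ) j i| ≤ 1 - δ i := by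
    intro i J hJ
    refine le_trans ?_ (hcol i)
    unfold normS1
    exact Finset.le_sup'
      (fun J : Finset (Fin ν) => ∑ j ∈ J, |(1 - Z : Matrix (Fin ν) (Fin ν) ℝ) j i|)
      (Finset.mem_filter.2 ⟨Finset.mem_powerset.2 (Finset.subset_univ J), hJ⟩)
  -- key column bound
  have key : ∀ i (J : Finset (Fin ν)), i ∉ J → J.card + 1 ≤ s →
      ∑ j ∈ J, |Z j i| ≤ Z i i - δ i := by
    intro i J hiJ hJs
    have h1 := hnorm i (insert i J) (by rwa [Finset.card_insert_of_notMem hiJ])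
    rw [Finset.sum_insert hiJ] at h1
    have h2 : ∀ j ∈ J, |(1 - Z : Matrix (Fin ν) (Fin ν) ℝ) j i| = |Z j i| := by
      intro j hj
      have hji : j ≠ i := fun h => hiJ (h ▸ hj)
      simp [Matrix.sub_apply, Matrix.one_apply_ne hji]
    rw [Finset.sum_congr rfl h2] at h1
    have h3 : (1 - Z : Matrix (Fin ν) (Fin ν) ℝ) i i = 1 - Z i i := by
      simp [Matrix.sub_apply, Matrix.one_apply_eq]
    rw [h3] at h1
    have h4 : 1 - Z i i ≤ |1 - Z i i| := le_abs_self _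
    linarith
  have hdpos : ∀ i, 0 < Z i i := by
    intro i
    have h0 := key i ∅ (by simp) (by simpa using hs.le)
    simp only [Finset.sum_empty] at h0
    linarith [(hδ i).1]
  set W : Matrix (Fin ν) (Fin ν) ℝ := Matrix.of (fun j i => Z j i / Z i i) with hWdef
  have hWfac : W = Z * Matrix.diagonal (fun i => (Z i i)⁻¹) := by
    ext j i
    simp [hWdef, Matrix.mul_diagonal, div_eq_mul_inv]
  have hWrank : W.rank = m := by
    rw [hWfac, Matrix.rank_mul_eq_left_of_isUnit_det _ _ ?_, hrank]
    rw [Matrix.det_diagonal]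
    exact isUnit_iff_ne_zero.2
      (Finset.prod_ne_zero_iff.2 (fun i _ => inv_ne_zero (hdpos i).ne'))
  have hWd : ∀ i, W i i = 1 := fun i => div_self (hdpos i).ne'
  have keyW : ∀ i (J : Finset (Fin ν)), i ∉ J → J.card + 1 ≤ s →
      ∑ j ∈ J, |W j i| ≤ 1 := by
    intro i J hiJ hJs
    have h1 : ∑ j ∈ J, |W j i| = (∑ j ∈ J, |Z j i|) / Z i i := by
      rw [Finset.sum_div]
      refine Finset.sum_congr rfl fun j _ => ?_
      show |Z j i / Z i i| = _
      rw [abs_div, abs_of_pos (hdpos i)]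
    rw [h1, div_le_one (hdpos i)]
    have := key i J hiJ hJs
    linarith [(hδ i).1]
  have hs2 : (2:ℝ) ≤ (s:ℝ) := by exact_mod_cast hs
  set c : ℝ := 1 / ((s:ℝ) - 1) with hcdef
  have hspos : (0:ℝ) < (s:ℝ) - 1 := by linarith
  have hcpos : 0 < c := by rw [hcdef]; positivity
  -- column square bounds
  have colsq : ∀ i, ∑ j, (W j i) ^ 2 ≤ 2 + ν * c ^ 2 := by
    intro i
    set Big := Finset.univ.filter (fun j => j ≠ i ∧ c < |W j i|) with hBigdef
    have hiBig : i ∉ Big := by simp [hBigdef]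
    have hBigcard : Big.card + 1 ≤ s := by
      by_contra hbc
      push_neg at hbc
      have hle : s - 1 ≤ Big.card := by omega
      obtain ⟨B', hB'sub, hB'card⟩ := Finset.exists_subset_card_eq hle
      have hiB' : i ∉ B' := by
        intro h
        have := hB'sub h
        rw [hBigdef, Finset.mem_filter] at this
        exact this.2.1 rfl
      have hcard1 : B'.card + 1 ≤ s := by omega
      have h1 := keyW i B' hiB' hcard1
      have hne : B'.Nonempty := Finset.card_pos.1 (by omega)
      have h2 : ∑ _j ∈ B', c < ∑ j ∈ B', |W j i| := by
        apply Finset.sum_lt_sum_of_nonempty hne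
        intro j hj
        have := hB'sub hj
        rw [hBigdef, Finset.mem_filter] at this
        exact this.2.2
      rw [Finset.sum_const, nsmul_eq_mul, hB'card] at h2
      have hcast : ((s - 1 : ℕ) : ℝ) = (s:ℝ) - 1 := by
        push_cast [Nat.cast_sub (by omega : 1 ≤ s)]
        ring
      rw [hcast, hcdef, mul_one_div, div_self hspos.ne'] at h2
      linarith
    have hsplit : ∑ j, (W j i) ^ 2 = (W i i) ^ 2 + ∑ j ∈ Finset.univ.erase i, (W j i) ^ 2 :=
      (Finset.add_sum_erase _ _ (Finset.mem_univ i)).symm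
    have hBigeq : (Finset.univ.erase i).filter (fun j => c < |W j i|) = Big := by
      ext j
      simp [hBigdef, Finset.mem_erase, and_comm]
    have hpart : ∑ j ∈ Finset.univ.erase i, (W j i) ^ 2 =
        ∑ j ∈ Big, (W j i) ^ 2 +
          ∑ j ∈ (Finset.univ.erase i).filter (fun j => ¬ c < |W j i|), (W j i) ^ 2 := by
      rw [← hBigeq]
      exact (Finset.sum_filter_add_sum_filter_not _ _ _).symm
    have hbig1 : ∑ j ∈ Big, (W j i) ^ 2 ≤ 1 := by
      have hb1 : ∑ j ∈ Big, (W j i) ^ 2 = ∑ j ∈ Big, |W j i| ^ 2 := by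
        simp [sq_abs]
      have hb2 : ∑ j ∈ Big, |W j i| ^ 2 ≤ (∑ j ∈ Big, |W j i|) ^ 2 :=
        Finset.sum_sq_le_sq_sum_of_nonneg (fun j _ => abs_nonneg _)
      have hb3 : ∑ j ∈ Big, |W j i| ≤ 1 := keyW i Big hiBig hBigcard
      have hb4 : (0:ℝ) ≤ ∑ j ∈ Big, |W j i| :=
        Finset.sum_nonneg (fun j _ => abs_nonneg _)
      nlinarith
    have hsmall : ∑ j ∈ (Finset.univ.erase i).filter (fun j => ¬ c < |W j i|), (W j i) ^ 2
        ≤ ν * c ^ 2 := by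
      have h1 : ∀ j ∈ (Finset.univ.erase i).filter (fun j => ¬ c < |W j i|),
          (W j i) ^ 2 ≤ c ^ 2 := by
        intro j hj
        have h := (Finset.mem_filter.1 hj).2
        push_neg at h
        have := sq_abs (W j i)
        nlinarith [abs_nonneg (W j i)]
      calc ∑ j ∈ (Finset.univ.erase i).filter (fun j => ¬ c < |W j i|), (W j i) ^ 2
          ≤ ∑ _j ∈ (Finset.univ.erase i).filter (fun j => ¬ c < |W j i|), c ^ 2 :=
            Finset.sum_le_sum h1
        _ = ((Finset.univ.erase i).filter (fun j => ¬ c < |W j i|)).card * c ^ 2 := by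
            rw [Finset.sum_const, nsmul_eq_mul]
        _ ≤ ν * c ^ 2 := by
            apply mul_le_mul_of_nonneg_right _ (by positivity)
            have hcard : ((Finset.univ.erase i).filter (fun j => ¬ c < |W j i|)).card ≤ ν :=
              le_trans (Finset.card_le_univ _) (by simp)
            exact_mod_cast hcard
    rw [hsplit, hpart, hWd i]
    nlinarith
  set F : ℝ := ∑ i, ∑ j, (W j i) ^ 2 with hFdef
  have hFle : F ≤ ν * (2 + ν * c ^ 2) := by
    rw [hFdef]
    calc ∑ i, ∑ j, (W j i) ^ 2 ≤ ∑ _i : Fin ν, (2 + ν * c ^ 2) :=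
          Finset.sum_le_sum (fun i _ => colsq i)
      _ = ν * (2 + ν * c ^ 2) := by
          rw [Finset.sum_const, nsmul_eq_mul, Finset.card_univ, Fintype.card_fin]
  have hF0 : (0:ℝ) ≤ F := by
    rw [hFdef]; positivity
  set M : Matrix (Fin ν) (Fin ν) ℝ := W + W.conjTranspose with hMdef
  have hMherm : M.IsHermitian := Matrix.isHermitian_add_transpose_self W
  have hWtr : W.trace = ν := by
    rw [Matrix.trace]
    simp only [Matrix.diag]
    rw [Finset.sum_congr rfl (fun i _ => hWd i), Finset.sum_const, nsmul_eq_mul,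
      Finset.card_univ, Fintype.card_fin, mul_one]
  have hMtr : M.trace = 2 * ν := by
    rw [hMdef, Matrix.trace_add, Matrix.trace_conjTranspose, hWtr]
    simp
    ring
  have hMrankle : (M.rank : ℝ) ≤ 2 * m := by
    have h1 : M.rank ≤ W.rank + W.conjTranspose.rank := myrank_add_le _ _
    rw [Matrix.rank_conjTranspose, hWrank] at h1
    have : (M.rank : ℝ) ≤ (m + m : ℕ) := by exact_mod_cast h1
    push_cast at this
    linarith
  have hsymm : ∀ i j, M j i = M i j := by
    intro i j
    have := congrFun (congrFun hMherm i) j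
    simpa [Matrix.conjTranspose_apply] using this
  have hMMeq : (M * M).trace = ∑ i, ∑ j, (M i j) ^ 2 := by
    rw [Matrix.trace]
    simp only [Matrix.diag, Matrix.mul_apply]
    refine Finset.sum_congr rfl fun i _ => Finset.sum_congr rfl fun j _ => ?_
    rw [hsymm i j]
    ring
  have hMapp : ∀ i j, M i j = W i j + W j i := by
    intro i j
    rw [hMdef]
    simp [Matrix.conjTranspose_apply]
  have hMMle : (M * M).trace ≤ 4 * F := by
    rw [hMMeq]
    have h1 : ∀ i j : Fin ν, (M i j) ^ 2 ≤ 2 * (W i j) ^ 2 + 2 * (W j i) ^ 2 := by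
      intro i j
      rw [hMapp]
      exact my_sq_add_le _ _
    calc ∑ i, ∑ j, (M i j) ^ 2
        ≤ ∑ i, ∑ j, (2 * (W i j) ^ 2 + 2 * (W j i) ^ 2) :=
          Finset.sum_le_sum (fun i _ => Finset.sum_le_sum (fun j _ => h1 i j))
      _ = 2 * (∑ i, ∑ j, (W i j) ^ 2) + 2 * (∑ i, ∑ j, (W j i) ^ 2) := by
          simp only [Finset.sum_add_distrib, Finset.mul_sum]
      _ = 4 * F := by
          have hcomm : ∑ i, ∑ j, (W i j) ^ 2 = ∑ j, ∑ i, (W i j) ^ 2 := Finset.sum_comm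
          rw [hcomm, hFdef]
          ring
  have hMM0 : (0:ℝ) ≤ (M * M).trace := by
    rw [hMMeq]
    exact Finset.sum_nonneg fun i _ => Finset.sum_nonneg fun j _ => sq_nonneg _
  have hkey := mytrace_sq_le M hMherm
  rw [hMtr] at hkey
  have hchain : (2 * (ν:ℝ)) ^ 2 ≤ 2 * m * (4 * F) := by
    calc (2 * (ν:ℝ)) ^ 2 ≤ (M.rank : ℝ) * (M * M).trace := hkey
      _ ≤ 2 * m * (M * M).trace := mul_le_mul_of_nonneg_right hMrankle hMM0
      _ ≤ 2 * m * (4 * F) := by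
          apply mul_le_mul_of_nonneg_left hMMle (by positivity)
  clear_value F c W M
  clear hkey hMM0 hMMle hMapp hMMeq hsymm hMrankle hMtr hWtr hMherm hMdef M
  clear colsq keyW hWd hWrank hWfac hWdef hFdef W hdpos key hnorm hcol hrank Z hδ δ
  have hbig : 4 * (ν:ℝ) ^ 2 ≤ 8 * m * (ν * (2 + ν * c ^ 2)) := by
    have h5 := mul_le_mul_of_nonneg_left hFle (show (0:ℝ) ≤ 8 * m by positivity)
    nlinarith [hchain]
  have hν0 : (0:ℝ) < ν := by nlinarith [hν, hsqnn]
  have h4ν : 4 * (ν:ℝ) ≤ 16 * m + 8 * m * ν * c ^ 2 := by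
    have h2 : (4 * (ν:ℝ)) * ν ≤ (16 * m + 8 * m * ν * c ^ 2) * ν := by nlinarith [hbig]
    exact le_of_mul_le_mul_right h2 hν0
  have h8m : 8 * (m:ℝ) < ((s:ℝ) - 1) ^ 2 := by
    nlinarith [hcon, hsq, hsqnn]
  have hc2 : c ^ 2 * ((s:ℝ) - 1) ^ 2 = 1 := by
    rw [hcdef]
    field_simp
  have h8mc : 8 * (m:ℝ) * c ^ 2 ≤ 1 := by
    nlinarith [mul_lt_mul_of_pos_right h8m (pow_pos hcpos 2), hc2]
  have h3ν : 3 * (ν:ℝ) ≤ 16 * m := by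
    nlinarith [h4ν, mul_le_mul_of_nonneg_right h8mc hν0.le]
  have hνlb : 8 * (m:ℝ) + 1 < ν := by nlinarith [hν, hsq, hsqnn]
  have hm0' : (0:ℝ) ≤ m := by positivity
  linarith
end

section
/- Suppose the m×n real matrix A satisfies VSḠ_s(ξ,σ,θ) with certificate Y, where ξ ∈ (0,1), σ ≥ 0, θ ≥ 1. Let w ∈ ℝ^n with w_i ≥ 0 for all i ∈ P_+ and ‖w − w^s‖₁ ≤ μ, where w^s is obtained from w by zeroing all but the s largest-in-magnitude entries, and let y ∈ ℝ^m with ‖Aw − y‖ ≤ δ. Run the Non-Euclidean Matching Pursuit iteration with parameters τ_− = ξ/((1+ξθ)s), τ_+ = ξθ/((1+ξθ)s), τ = ξ/((1+ξ)s): v^{(0)} = 0, α_0 = (‖Yᵀy‖_{s,1} + sσδ + μ)/(1 − ρ) with ρ = ξθ/(1+ξθ), and for k ≥ 1, u = Yᵀ(y − Av^{(k−1)}), Δ_i = max(u_i − τ_−·α_{k−1} − σδ, 0) for i ∈ P_+, Δ_i = max(u_i − τ·α_{k−1} − σδ, 0) for i ∈ P_n with u_i ≥ 0, Δ_i = −max(|u_i|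 − τ·α_{k−1} − σδ, 0) for i ∈ P_n with u_i < 0, v^{(k)} = v^{(k−1)} + Δ, α_k = λ·α_{k−1} + 2sσδ + μ, where λ = max((ξ + ξθ)/(1 + ξθ), 2ξ/(1+ξ)). Then for every t ≥ 0 the iterate v^{(t)} satisfies v_i^{(t)} ≥ 0 for all i ∈ P_+ and ‖w − v^{(t)}‖₁ ≤ (2sσδ + μ)/(1 − λ) + λ^t · [ (‖Yᵀy‖_{s,1} + sσδ + μ)/(1 − ρ) − (2sσδ + μ)/(1 − λ) ]. -/
open Finset

section Aux

variable {m : ℕ} {N : (Fin m → ℝ) → ℝ}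

lemma isNorm_zero (hN : IsNorm N) : N 0 = 0 := by
  have h := hN.2.1 0 0
  simpa using h

lemma isNorm_neg (hN : IsNorm N) (x : Fin m → ℝ) : N (-x) = N x := by
  have := hN.2.1 (-1) x
  simpa using this

lemma isNorm_nonneg (hN : IsNorm N) (x : Fin m → ℝ) : 0 ≤ N x := by
  have h1 := hN.1 x (-x)
  rw [add_neg_cancel, isNorm_zero hN, isNorm_neg hN] at h1
  linarith

lemma isNorm_sum_le (hN : IsNorm N) {ι : Type*} (s : Finset ι) (f : ι → Fin m → ℝ) :
    N (∑ i ∈ s, f i) ≤ ∑ i ∈ s, N (f i) := by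
  classical
  induction s using Finset.induction with
  | empty => simp [isNorm_zero hN]
  | insert _ _ h ih =>
    rw [Finset.sum_insert h, Finset.sum_insert h]
    exact le_trans (hN.1 _ _) (by linarith)

lemma isNorm_expand (hN : IsNorm N) (y : Fin m → ℝ) :
    N y ≤ ∑ k, |y k| * N (Pi.single k 1) := by
  have hy : y = ∑ k, (y k) • (Pi.single k 1 : Fin m → ℝ) := by
    funext j
    simp [Finset.sum_apply, Pi.single_apply]
  calc N y = N (∑ k, (y k) • (Pi.single k 1 : Fin m → ℝ)) := by rw [← hy]
    _ ≤ ∑ k, N ((y k) • (Pi.single k 1 : Fin m → ℝ)) := isNorm_sum_le hN _ _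
    _ = ∑ k, |y k| * N (Pi.single k 1) := Finset.sum_congr rfl fun k _ => hN.2.1 _ _

lemma isNorm_sub_le (hN : IsNorm N) (x z : Fin m → ℝ) : |N x - N z| ≤ N (x - z) := by
  have h1 : N x ≤ N (x - z) + N z := by
    have := hN.1 (x - z) z
    simpa [sub_add_cancel] using this
  have h2 : N z ≤ N (z - x) + N x := by
    have := hN.1 (z - x) x
    simpa [sub_add_cancel] using this
  have h3 : N (z - x) = N (x - z) := by
    rw [← neg_sub x z, isNorm_neg hN]
  rw [abs_le]
  constructor <;> linarith

lemma isNorm_continuous (hN : IsNorm N) : Continuous N := by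
  rw [Metric.continuous_iff]
  intro x ε hε
  set K : ℝ := ∑ k, N (Pi.single k (1:ℝ)) with hK
  have hK0 : 0 ≤ K := Finset.sum_nonneg fun k _ => isNorm_nonneg hN _
  refine ⟨ε / (K + 1), by positivity, fun z hz => ?_⟩
  have h1 : |N z - N x| ≤ N (z - x) := isNorm_sub_le hN z x
  have h2 : N (z - x) ≤ ∑ k, |(z - x) k| * N (Pi.single k 1) := isNorm_expand hN _
  have h3 : ∑ k, |(z - x) k| * N (Pi.single k 1) ≤ ∑ k, dist z x * N (Pi.single k 1) := by
    refine Finset.sum_le_sum fun k _ => mul_le_mul_of_nonneg_right ?_ (isNorm_nonneg hN _)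
    have := dist_le_pi_dist z x k
    rwa [Real.dist_eq] at this
  have h4 : ∑ k, dist z x * N (Pi.single k (1:ℝ)) = dist z x * K := by
    rw [← Finset.mul_sum]
  have hd0 : 0 ≤ dist z x := dist_nonneg
  have : dist (N z) (N x) ≤ dist z x * K := by
    rw [Real.dist_eq]; linarith
  have : dist z x * K ≤ (ε / (K + 1)) * K := by
    apply mul_le_mul_of_nonneg_right (le_of_lt hz) hK0
  have hlt : (ε / (K + 1)) * K < ε := by
    rw [div_mul_eq_mul_div, div_lt_iff₀ (by linarith)]
    nlinarith
  linarith [Real.dist_eq (N z) (N x)]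

lemma isNorm_lower (hN : IsNorm N) : ∃ c : ℝ, 0 < c ∧ ∀ x, c * (∑ k, |x k|) ≤ N x := by
  rcases Nat.eq_zero_or_pos m with hm | hm
  · subst hm
    refine ⟨1, one_pos, fun x => ?_⟩
    rw [Subsingleton.elim x (0 : Fin 0 → ℝ), isNorm_zero hN]
    simp
  · set S : Set (Fin m → ℝ) := {x | ∑ k, |x k| = 1} with hS
    have hsumcont : Continuous fun x : Fin m → ℝ => ∑ k, |x k| :=
      continuous_finset_sum _ fun k _ => (continuous_apply k).abs
    have hS_closed : IsClosed S := isClosed_eq hsumcont continuous_const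
    have hS_sub : S ⊆ Metric.closedBall 0 1 := by
      intro x hx
      rw [Metric.mem_closedBall, dist_pi_le_iff zero_le_one]
      intro k
      rw [Real.dist_eq]
      simp only [Pi.zero_apply, sub_zero]
      calc |x k| ≤ ∑ j, |x j| := Finset.single_le_sum (f := fun j => |x j|) (fun j _ => abs_nonneg _) (Finset.mem_univ k)
        _ = 1 := hx
    have hS_cpt : IsCompact S :=
      (isCompact_closedBall (0 : Fin m → ℝ) 1).of_isClosed_subset hS_closed hS_sub
    have hne : S.Nonempty := by
      refine ⟨Pi.single ⟨0, hm⟩ (1:ℝ), ?_⟩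
      simp [hS, Pi.single_apply, apply_ite abs]
    obtain ⟨x₀, hx₀S, hmin⟩ := hS_cpt.exists_isMinOn hne (isNorm_continuous hN).continuousOn
    have hc : 0 < N x₀ := by
      rcases (isNorm_nonneg hN x₀).eq_or_lt with h | h
      · exfalso
        have hx0 : x₀ = 0 := hN.2.2 x₀ h.symm
        rw [hS] at hx₀S
        simp [hx0] at hx₀S
      · exact h
    refine ⟨N x₀, hc, fun x => ?_⟩
    have hsum0 : 0 ≤ ∑ k, |x k| := Finset.sum_nonneg fun k _ => abs_nonneg _
    rcases hsum0.eq_or_lt with ht | ht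
    · have hx0 : x = 0 := by
        funext k
        have := (Finset.sum_eq_zero_iff_of_nonneg (fun j (_ : j ∈ Finset.univ) => abs_nonneg (x j))).mp ht.symm k (Finset.mem_univ k)
        simpa [abs_eq_zero] using this
      subst hx0
      simp [isNorm_zero hN]
    · set t : ℝ := ∑ k, |x k| with hts
      have hmem : (t⁻¹ • x) ∈ S := by
        rw [hS]
        simp only [Set.mem_setOf_eq, Pi.smul_apply, smul_eq_mul, abs_mul,
          abs_of_pos (inv_pos.mpr ht)]
        rw [← Finset.mul_sum, ← hts, inv_mul_cancel₀ (ne_of_gt ht)]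
      have h1 : N x₀ ≤ N (t⁻¹ • x) := hmin hmem
      rw [hN.2.1, abs_of_pos (inv_pos.mpr ht)] at h1
      have := mul_le_mul_of_nonneg_left h1 (le_of_lt ht)
      rw [← mul_assoc, mul_inv_cancel₀ (ne_of_gt ht), one_mul] at this
      calc N x₀ * t ≤ N x := by nlinarith [mul_comm t (N x₀)]

end Aux
section Aux2

variable {m : ℕ} {N : (Fin m → ℝ) → ℝ}

lemma dual_pairing (hN : IsNorm N) (v x : Fin m → ℝ) :
    |∑ k, v k * x k| ≤ dualNorm N v * N x := by
  obtain ⟨c, hc, hlow⟩ := isNorm_lower hN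
  have hbdd : BddAbove {r : ℝ | ∃ x : Fin m → ℝ, N x ≤ 1 ∧ r = ∑ k, v k * x k} := by
    refine ⟨(∑ k, |v k|) * c⁻¹, ?_⟩
    rintro r ⟨z, hz, rfl⟩
    have hzb : ∀ k, |z k| ≤ c⁻¹ := by
      intro k
      have h1 : |z k| ≤ ∑ j, |z j| :=
        Finset.single_le_sum (f := fun j => |z j|) (fun j _ => abs_nonneg _) (Finset.mem_univ k)
      have h2 : c * (∑ j, |z j|) ≤ 1 := le_trans (hlow z) hz
      rw [← le_div_iff₀' hc] at h2
      rw [one_div] at h2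
      linarith
    calc ∑ k, v k * z k ≤ ∑ k, |v k * z k| := Finset.sum_le_sum fun k _ => le_abs_self _
      _ = ∑ k, |v k| * |z k| := by simp [abs_mul]
      _ ≤ ∑ k, |v k| * c⁻¹ :=
        Finset.sum_le_sum fun k _ => mul_le_mul_of_nonneg_left (hzb k) (abs_nonneg _)
      _ = (∑ k, |v k|) * c⁻¹ := by rw [Finset.sum_mul]
  have hmem : ∀ z : Fin m → ℝ, N z ≤ 1 → ∑ k, v k * z k ≤ dualNorm N v := fun z hz =>
    le_csSup hbdd ⟨z, hz, rfl⟩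
  rcases (isNorm_nonneg hN x).eq_or_lt with h0 | h0
  · have hx0 : x = 0 := hN.2.2 x h0.symm
    subst hx0
    simp [← h0]
  · set t : ℝ := N x with hts
    have ht1 : N (t⁻¹ • x) ≤ 1 := by
      rw [hN.2.1, abs_of_pos (inv_pos.mpr h0)]
      exact le_of_eq (inv_mul_cancel₀ (ne_of_gt h0))
    have ht2 : N (-(t⁻¹ • x)) ≤ 1 := by rwa [isNorm_neg hN]
    have h1 := hmem _ ht1
    have h2 := hmem _ ht2
    have e1 : ∑ k, v k * (t⁻¹ • x) k = t⁻¹ * ∑ k, v k * x k := by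
      rw [Finset.mul_sum]
      exact Finset.sum_congr rfl fun k _ => by simp [Pi.smul_apply, smul_eq_mul]; ring
    have e2 : ∑ k, v k * (-(t⁻¹ • x)) k = -(t⁻¹ * ∑ k, v k * x k) := by
      rw [← e1, ← Finset.sum_neg_distrib]
      exact Finset.sum_congr rfl fun k _ => by simp
    rw [e1] at h1
    rw [e2] at h2
    rw [abs_le]
    constructor
    · have := mul_le_mul_of_nonneg_left h2 (le_of_lt h0)
      rw [mul_neg, ← mul_assoc, mul_inv_cancel₀ (ne_of_gt h0), one_mul] at this
      nlinarith [mul_comm t (dualNorm N v)]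
    · have := mul_le_mul_of_nonneg_left h1 (le_of_lt h0)
      rw [← mul_assoc, mul_inv_cancel₀ (ne_of_gt h0), one_mul] at this
      nlinarith [mul_comm t (dualNorm N v)]

end Aux2

section Aux3

lemma normS1_exists {n : ℕ} (s : ℕ) (x : Fin n → ℝ) :
    ∃ J : Finset (Fin n), J.card ≤ s ∧ normS1 s x = ∑ i ∈ J, |x i| := by
  obtain ⟨J, hJ, hEq⟩ := Finset.exists_mem_eq_sup'
    (⟨∅, by simp⟩ : (Finset.univ.powerset.filter (fun J : Finset (Fin n) => J.card ≤ s)).Nonempty)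
    (fun J => ∑ i ∈ J, |x i|)
  refine ⟨J, ?_, hEq⟩
  simpa using (Finset.mem_filter.mp hJ).2

lemma le_normS1 {n : ℕ} (s : ℕ) (x : Fin n → ℝ) (J : Finset (Fin n)) (hJ : J.card ≤ s) :
    ∑ i ∈ J, |x i| ≤ normS1 s x := by
  apply Finset.le_sup' (fun J => ∑ i ∈ J, |x i|)
  simp [hJ]

end Aux3


set_option maxHeartbeats 4000000 in
theorem stmt12 {m n : ℕ} (A : Matrix (Fin m) (Fin n) ℝ) (Pplus : Finset (Fin n))
    (N : (Fin m → ℝ) → ℝ) (hN : IsNorm N)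
    (s : ℕ) (ξ σ θ : ℝ) (hξ0 : 0 < ξ) (hξ1 : ξ < 1) (hσ : 0 ≤ σ) (hθ : 1 ≤ θ)
    (Y : Matrix (Fin m) (Fin n) ℝ) (hY : VSGbarCert A Pplus s ξ σ θ N Y)
    (w : Fin n → ℝ) (μ : ℝ) (hw : ∀ i ∈ Pplus, 0 ≤ w i)
    (hμ : (∑ i, |w i|) - normS1 s w ≤ μ)
    (y : Fin m → ℝ) (δ : ℝ) (hδ : N (A.mulVec w - y) ≤ δ)
    (v : ℕ → Fin n → ℝ) (α : ℕ → ℝ)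
    (hv0 : v 0 = 0)
    (hα0 : α 0 = (normS1 s (Y.transpose.mulVec y) + s * σ * δ + μ) /
      (1 - ξ * θ / (1 + ξ * θ)))
    (hvk : ∀ k, v (k + 1) = fun i =>
      v k i +
        (if i ∈ Pplus then
            max ((Y.transpose.mulVec (y - A.mulVec (v k))) i
              - ξ / ((1 + ξ * θ) * s) * α k - σ * δ) 0
          else if 0 ≤ (Y.transpose.mulVec (y - A.mulVec (v k))) i then
            max ((Y.transpose.mulVec (y - A.mulVec (v k))) i
              - ξ / ((1 + ξ) * s) * α k - σ * δ) 0
          else -(max (|(Y.transpose.mulVec (y - A.mulVec (v k))) i|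
              - ξ / ((1 + ξ) * s) * α k - σ * δ) 0)))
    (hαk : ∀ k, α (k + 1) =
      max ((ξ + ξ * θ) / (1 + ξ * θ)) (2 * ξ / (1 + ξ)) * α k + 2 * s * σ * δ + μ) :
    ∀ t, (∀ i ∈ Pplus, 0 ≤ v t i) ∧
      (∑ i, |w i - v t i|) ≤
        (2 * s * σ * δ + μ) / (1 - max ((ξ + ξ * θ) / (1 + ξ * θ)) (2 * ξ / (1 + ξ))) +
          (max ((ξ + ξ * θ) / (1 + ξ * θ)) (2 * ξ / (1 + ξ))) ^ t *
            ((normS1 s (Y.transpose.mulVec y) + s * σ * δ + μ) / (1 - ξ * θ / (1 + ξ * θ)) -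
              (2 * s * σ * δ + μ) /
                (1 - max ((ξ + ξ * θ) / (1 + ξ * θ)) (2 * ξ / (1 + ξ)))) := by
  obtain ⟨hYσ, hBn, hBpn, hBpp⟩ := hY
  set Bm : Matrix (Fin n) (Fin n) ℝ := (1 - Y.transpose * A : Matrix (Fin n) (Fin n) ℝ) with hBm
  set τm : ℝ := ξ / ((1 + ξ * θ) * (s:ℝ)) with hτm
  set τp : ℝ := ξ * θ / ((1 + ξ * θ) * (s:ℝ)) with hτp
  set τ : ℝ := ξ / ((1 + ξ) * (s:ℝ)) with hτ
  set L : ℝ := max ((ξ + ξ * θ) / (1 + ξ * θ)) (2 * ξ / (1 + ξ)) with hL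
  set ρ : ℝ := ξ * θ / (1 + ξ * θ) with hρ
  have hd1 : (0:ℝ) < 1 + ξ * θ := by nlinarith
  have hd2 : (0:ℝ) < 1 + ξ := by linarith
  have hs0 : (0:ℝ) ≤ (s:ℝ) := Nat.cast_nonneg s
  have hτm0 : 0 ≤ τm := div_nonneg hξ0.le (mul_nonneg hd1.le hs0)
  have hτp0 : 0 ≤ τp := div_nonneg (mul_nonneg hξ0.le (by linarith)) (mul_nonneg hd1.le hs0)
  have hτ0 : 0 ≤ τ := div_nonneg hξ0.le (mul_nonneg hd2.le hs0)
  have hτmp : τm ≤ τp := by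
    rcases hs0.eq_or_lt with h | h
    · rw [hτm, hτp]; simp [← h]
    · rw [hτm, hτp, div_le_div_iff₀ (mul_pos hd1 h) (mul_pos hd1 h)]
      nlinarith [mul_nonneg (mul_nonneg hξ0.le (sub_nonneg.mpr hθ)) (mul_pos hd1 h).le]
  have hττp : τ ≤ τp := by
    rcases hs0.eq_or_lt with h | h
    · rw [hτ, hτp]; simp [← h]
    · rw [hτ, hτp, div_le_div_iff₀ (mul_pos hd2 h) (mul_pos hd1 h)]
      nlinarith [mul_nonneg (mul_nonneg hξ0.le (sub_nonneg.mpr hθ)) (mul_pos hd1 h).le,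
        mul_nonneg (mul_nonneg (mul_nonneg hξ0.le hξ0.le) (sub_nonneg.mpr hθ)) h.le]
  have hδ0 : 0 ≤ δ := le_trans (isNorm_nonneg hN _) hδ
  have hσδ : 0 ≤ σ * δ := mul_nonneg hσ hδ0
  have hL0 : 0 ≤ L := le_trans (div_nonneg (by nlinarith) hd1.le) (le_max_left _ _)
  have hL1 : L < 1 := by
    rw [hL, max_lt_iff]
    constructor
    · rw [div_lt_one hd1]; linarith
    · rw [div_lt_one hd2]; linarith
  have hρ1 : ρ < 1 := by rw [hρ, div_lt_one hd1]; nlinarith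
  have hsum1 : (s:ℝ) * τm + (s:ℝ) * τp ≤ L := by
    rcases hs0.eq_or_lt with h | h
    · rw [← h]; simpa using hL0
    · have he : (s:ℝ) * τm + (s:ℝ) * τp = (ξ + ξ * θ) / (1 + ξ * θ) := by
        rw [hτm, hτp]
        field_simp
      rw [he, hL]; exact le_max_left _ _
  have hsum2 : 2 * (s:ℝ) * τ ≤ L := by
    rcases hs0.eq_or_lt with h | h
    · rw [← h]; simpa using hL0
    · have he : 2 * (s:ℝ) * τ = 2 * ξ / (1 + ξ) := by
        rw [hτ]
        field_simp
      rw [he, hL]; exact le_max_right _ _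
  have hsum3 : (s:ℝ) * τp ≤ ρ := by
    rcases hs0.eq_or_lt with h | h
    · rw [← h, zero_mul, hρ]
      exact div_nonneg (mul_nonneg hξ0.le (by linarith)) hd1.le
    · have he : (s:ℝ) * τp = ρ := by
        rw [hτp, hρ]
        field_simp
      rw [he]
  -- the error vector
  set E : Fin n → ℝ := fun i => ∑ k, Y k i * (y - A.mulVec w) k with hEdef
  have hE : ∀ i, |E i| ≤ σ * δ := by
    intro i
    have h2 : N (y - A.mulVec w) ≤ δ := by
      rw [show y - A.mulVec w = -(A.mulVec w - y) from (neg_sub _ _).symm, isNorm_neg hN]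
      exact hδ
    calc |E i| ≤ dualNorm N (fun k => Y k i) * N (y - A.mulVec w) :=
          dual_pairing hN (fun k => Y k i) (y - A.mulVec w)
      _ ≤ σ * N (y - A.mulVec w) := mul_le_mul_of_nonneg_right (hYσ i) (isNorm_nonneg hN _)
      _ ≤ σ * δ := mul_le_mul_of_nonneg_left h2 hσ
  -- decomposition
  have hdec : ∀ z : Fin n → ℝ, ∀ i,
      Y.transpose.mulVec (y - A.mulVec z) i
        = E i + (w i - z i) - Bm.mulVec (fun j => w j - z j) i := by
    intro z i
    have h1 : y - A.mulVec z = (y - A.mulVec w) + A.mulVec (fun j => w j - z j) := by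
      rw [show (fun j => w j - z j) = w - z from rfl, Matrix.mulVec_sub]
      abel
    have h2 : Y.transpose.mulVec (A.mulVec (fun j => w j - z j))
        = (fun j => w j - z j) - Bm.mulVec (fun j => w j - z j) := by
      rw [Matrix.mulVec_mulVec]
      rw [show Y.transpose * A = 1 - Bm by rw [hBm, sub_sub_cancel]]
      rw [Matrix.sub_mulVec, Matrix.one_mulVec]
    have h3 : Y.transpose.mulVec (y - A.mulVec w) i = E i := by
      simp [Matrix.mulVec, dotProduct, Matrix.transpose_apply, hEdef]
    rw [h1, Matrix.mulVec_add]
    simp only [Pi.add_apply]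
    rw [h3, h2]
    simp only [Pi.sub_apply]
    ring
  -- bounds on Bm.mulVec
  have hBP : ∀ g : Fin n → ℝ, (∀ j ∈ Pplus, 0 ≤ g j) → ∀ i ∈ Pplus,
      -(τm * ∑ j, |g j|) ≤ Bm.mulVec g i ∧ Bm.mulVec g i ≤ τp * ∑ j, |g j| := by
    intro g hg i hi
    have hmv : Bm.mulVec g i = ∑ j, Bm i j * g j := by
      simp [Matrix.mulVec, dotProduct]
    constructor
    · rw [hmv, show -(τm * ∑ j, |g j|) = ∑ j, -(τm * |g j|) by
        rw [Finset.mul_sum, ← Finset.sum_neg_distrib]]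
      apply Finset.sum_le_sum
      intro j _
      by_cases hj : j ∈ Pplus
      · calc -(τm * |g j|) = (-τm) * g j := by rw [abs_of_nonneg (hg j hj)]; ring
          _ ≤ Bm i j * g j := mul_le_mul_of_nonneg_right (hBpp i hi j hj).1 (hg j hj)
      · have habs : |Bm i j| ≤ τm := abs_le.mpr (hBpn i hi j hj)
        calc -(τm * |g j|) ≤ -(|Bm i j| * |g j|) := by
              have := mul_le_mul_of_nonneg_right habs (abs_nonneg (g j))
              linarith
          _ = -|Bm i j * g j| := by rw [abs_mul]
          _ ≤ Bm i j * g j := neg_abs_le _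
    · rw [hmv, Finset.mul_sum]
      apply Finset.sum_le_sum
      intro j _
      by_cases hj : j ∈ Pplus
      · calc Bm i j * g j ≤ τp * g j :=
            mul_le_mul_of_nonneg_right (hBpp i hi j hj).2 (hg j hj)
          _ = τp * |g j| := by rw [abs_of_nonneg (hg j hj)]
      · have habs : |Bm i j| ≤ τm := abs_le.mpr (hBpn i hi j hj)
        calc Bm i j * g j ≤ |Bm i j * g j| := le_abs_self _
          _ = |Bm i j| * |g j| := abs_mul _ _
          _ ≤ τm * |g j| := mul_le_mul_of_nonneg_right habs (abs_nonneg _)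
          _ ≤ τp * |g j| := mul_le_mul_of_nonneg_right hτmp (abs_nonneg _)
  have hBN : ∀ g : Fin n → ℝ, ∀ i, i ∉ Pplus → |Bm.mulVec g i| ≤ τ * ∑ j, |g j| := by
    intro g i hi
    have hmv : Bm.mulVec g i = ∑ j, Bm i j * g j := by
      simp [Matrix.mulVec, dotProduct]
    rw [hmv, Finset.mul_sum]
    calc |∑ j, Bm i j * g j| ≤ ∑ j, |Bm i j * g j| := Finset.abs_sum_le_sum_abs _ _
      _ ≤ ∑ j, τ * |g j| := Finset.sum_le_sum fun j _ => by
          rw [abs_mul]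
          exact mul_le_mul_of_nonneg_right (hBn i hi j) (abs_nonneg _)
  -- base bound : ℓ1 norm of w is at most α 0
  have hW0 : 0 ≤ ∑ i, |w i| := Finset.sum_nonneg fun i _ => abs_nonneg _
  have hWα : ∑ i, |w i| ≤ α 0 := by
    have hwdec : ∀ i, w i = Y.transpose.mulVec y i - E i + Bm.mulVec w i := by
      intro i
      have h := hdec 0 i
      simp only [Matrix.mulVec_zero, sub_zero, Pi.zero_apply] at h
      linarith
    have hBw : ∀ i, |Bm.mulVec w i| ≤ τp * ∑ j, |w j| := by
      intro i
      by_cases hi : i ∈ Pplus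
      · have h := hBP w hw i hi
        rw [abs_le]
        refine ⟨?_, h.2⟩
        have h2 : τm * ∑ j, |w j| ≤ τp * ∑ j, |w j| := mul_le_mul_of_nonneg_right hτmp hW0
        linarith [h.1]
      · exact le_trans (hBN w i hi) (mul_le_mul_of_nonneg_right hττp hW0)
    obtain ⟨J, hJc, hJe⟩ := normS1_exists s w
    have h1 : normS1 s w ≤ normS1 s (Y.transpose.mulVec y) + (s:ℝ) * (σ * δ)
        + ρ * ∑ j, |w j| := by
      rw [hJe]
      have hterm : ∀ i, |w i| ≤ |Y.transpose.mulVec y i| + (σ * δ + τp * ∑ j, |w j|) := by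
        intro i
        calc |w i| = |Y.transpose.mulVec y i - E i + Bm.mulVec w i| := by rw [← hwdec i]
          _ ≤ |Y.transpose.mulVec y i - E i| + |Bm.mulVec w i| := abs_add_le _ _
          _ ≤ (|Y.transpose.mulVec y i| + |E i|) + |Bm.mulVec w i| := by
              linarith [abs_sub (Y.transpose.mulVec y i) (E i)]
          _ ≤ _ := by linarith [hE i, hBw i]
      calc ∑ i ∈ J, |w i|
          ≤ ∑ i ∈ J, (|Y.transpose.mulVec y i| + (σ * δ + τp * ∑ j, |w j|)) :=
            Finset.sum_le_sum fun i _ => hterm i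
        _ = (∑ i ∈ J, |Y.transpose.mulVec y i|) + J.card * (σ * δ + τp * ∑ j, |w j|) := by
            rw [Finset.sum_add_distrib, Finset.sum_const, nsmul_eq_mul]
        _ ≤ normS1 s (Y.transpose.mulVec y) + (s:ℝ) * (σ * δ + τp * ∑ j, |w j|) := by
            refine add_le_add (le_normS1 s _ J hJc) ?_
            refine mul_le_mul_of_nonneg_right ?_ (add_nonneg hσδ (mul_nonneg hτp0 hW0))
            exact_mod_cast hJc
        _ ≤ _ := by
            have h3 : ((s:ℝ) * τp) * (∑ j, |w j|) ≤ ρ * ∑ j, |w j| :=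
              mul_le_mul_of_nonneg_right hsum3 hW0
            have h4 : (s:ℝ) * (σ * δ + τp * ∑ j, |w j|)
                = (s:ℝ) * (σ * δ) + ((s:ℝ) * τp) * (∑ j, |w j|) := by ring
            linarith
    rw [hα0, le_div_iff₀ (by linarith : (0:ℝ) < 1 - ρ)]
    have h5 : (∑ i, |w i|) * (1 - ρ) = (∑ i, |w i|) - ρ * (∑ i, |w i|) := by ring
    linarith [hμ, h1]
  clear_value Bm τm τp τ L ρ E
  -- the invariant
  have key : ∀ t, (∀ i, (i ∈ Pplus → 0 ≤ w i - v t i ∧ w i - v t i ≤ w i)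
      ∧ (i ∉ Pplus → |w i - v t i| ≤ |w i|)) ∧ (∑ i, |w i - v t i|) ≤ α t := by
    intro t
    induction t with
    | zero =>
      constructor
      · intro i
        constructor
        · intro hi
          simp only [hv0, Pi.zero_apply, sub_zero]
          exact ⟨hw i hi, le_refl _⟩
        · intro _
          simp only [hv0, Pi.zero_apply, sub_zero, le_refl]
      · simpa only [hv0, Pi.zero_apply, sub_zero] using hWα
    | succ k ih =>
      obtain ⟨ihpt, ihsum⟩ := ih
      set g : Fin n → ℝ := fun i => w i - v k i with hg
      have hgP : ∀ j ∈ Pplus, 0 ≤ g j := fun j hj => ((ihpt j).1 hj).1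
      have hgw : ∀ j ∈ Pplus, g j ≤ w j := fun j hj => ((ihpt j).1 hj).2
      have hgabs : ∀ j, j ∉ Pplus → |g j| ≤ |w j| := fun j hj => (ihpt j).2 hj
      have hG : ∑ j, |g j| ≤ α k := ihsum
      have hαk0 : 0 ≤ α k :=
        le_trans (Finset.sum_nonneg fun _ _ => abs_nonneg _) hG
      set u : Fin n → ℝ := Y.transpose.mulVec (y - A.mulVec (v k)) with hudef
      have hud : ∀ i, u i = E i + g i - Bm.mulVec g i := fun i => hdec (v k) i
      set Δ : Fin n → ℝ := fun i =>
        if i ∈ Pplus then max (u i - τm * α k - σ * δ) 0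
        else if 0 ≤ u i then max (u i - τ * α k - σ * δ) 0
        else -(max (|u i| - τ * α k - σ * δ) 0) with hΔ
      have hvstep : ∀ i, v (k+1) i = v k i + Δ i := fun i => congrFun (hvk k) i
      clear_value g u Δ
      have hstep : ∀ i,
          (i ∈ Pplus → 0 ≤ g i - Δ i ∧ g i - Δ i ≤ g i
            ∧ g i - Δ i ≤ (τm + τp) * α k + 2 * (σ * δ))
          ∧ (i ∉ Pplus → |g i - Δ i| ≤ |g i| ∧ |g i - Δ i| ≤ 2 * (τ * α k + σ * δ)) := by
        intro i
        have hEi := abs_le.mp (hE i)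
        have hui := hud i
        constructor
        · intro hi
          have hBi := hBP g hgP i hi
          have hB1 : Bm.mulVec g i ≤ τp * α k :=
            le_trans hBi.2 (mul_le_mul_of_nonneg_left hG hτp0)
          have hB2 : -(τm * α k) ≤ Bm.mulVec g i := by
            have : τm * ∑ j, |g j| ≤ τm * α k := mul_le_mul_of_nonneg_left hG hτm0
            linarith [hBi.1]
          have hgi : 0 ≤ g i := hgP i hi
          have hΔi : Δ i = max (u i - τm * α k - σ * δ) 0 := by
            simp only [hΔ, if_pos hi]
          rcases le_total (u i - τm * α k - σ * δ) 0 with hcase | hcase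
          · rw [hΔi, max_eq_right hcase]
            refine ⟨by linarith, by linarith, by linarith⟩
          · rw [hΔi, max_eq_left hcase]
            refine ⟨by linarith, by linarith, by linarith⟩
        · intro hi
          have hBi := abs_le.mp (hBN g i hi)
          have hB1 : Bm.mulVec g i ≤ τ * α k := by
            have : τ * ∑ j, |g j| ≤ τ * α k := mul_le_mul_of_nonneg_left hG hτ0
            linarith [hBi.2]
          have hB2 : -(τ * α k) ≤ Bm.mulVec g i := by
            have : τ * ∑ j, |g j| ≤ τ * α k := mul_le_mul_of_nonneg_left hG hτ0
            linarith [hBi.1]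
          by_cases hs : 0 ≤ u i
          · have hΔi : Δ i = max (u i - τ * α k - σ * δ) 0 := by
              simp only [hΔ, if_neg hi, if_pos hs]
            rcases le_total (u i - τ * α k - σ * δ) 0 with h1 | h1
            · rw [hΔi, max_eq_right h1, sub_zero]
              exact ⟨le_refl _, abs_le.mpr ⟨by linarith, by linarith⟩⟩
            · rw [hΔi, max_eq_left h1]
              have h2 : 0 ≤ g i - (u i - τ * α k - σ * δ) := by linarith
              have h3 : 0 ≤ g i := by linarith
              rw [abs_of_nonneg h2, abs_of_nonneg h3]
              exact ⟨by linarith, by linarith⟩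
          · have hu' : |u i| = -u i := abs_of_neg (lt_of_not_ge hs)
            have hΔi : Δ i = -(max (-u i - τ * α k - σ * δ) 0) := by
              simp only [hΔ, if_neg hi, if_neg hs, hu']
            rcases le_total (-u i - τ * α k - σ * δ) 0 with h1 | h1
            · rw [hΔi, max_eq_right h1, neg_zero, sub_zero]
              exact ⟨le_refl _, abs_le.mpr ⟨by linarith, by linarith⟩⟩
            · rw [hΔi, max_eq_left h1]
              have h2 : g i - -(-u i - τ * α k - σ * δ) ≤ 0 := by linarith
              have h3 : g i ≤ 0 := by linarith
              rw [abs_of_nonpos h2, abs_of_nonpos h3]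
              exact ⟨by linarith, by linarith⟩
      have hnew : ∀ i, w i - v (k+1) i = g i - Δ i := by
        intro i
        rw [hvstep i, hg]
        simp only [hg]
        ring
      have hallw : ∀ i, |w i - v (k+1) i| ≤ |w i| := by
        intro i
        rw [hnew i]
        by_cases hi : i ∈ Pplus
        · obtain ⟨h1, h2, _⟩ := (hstep i).1 hi
          rw [abs_of_nonneg h1]
          calc g i - Δ i ≤ g i := h2
            _ ≤ w i := hgw i hi
            _ ≤ |w i| := le_abs_self _
        · exact le_trans ((hstep i).2 hi).1 (hgabs i hi)
      constructor
      · intro i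
        constructor
        · intro hi
          obtain ⟨h1, h2, _⟩ := (hstep i).1 hi
          rw [hnew i]
          exact ⟨h1, le_trans h2 (hgw i hi)⟩
        · intro hi
          exact hallw i
      · -- the sum bound
        obtain ⟨J, hJc, hJe⟩ := normS1_exists s w
        set M : ℝ := max ((τm + τp) * α k + 2 * (σ * δ)) (2 * (τ * α k + σ * δ)) with hM
        have hM0 : 0 ≤ M :=
          le_trans (add_nonneg (mul_nonneg (add_nonneg hτm0 hτp0) hαk0) (by linarith))
            (le_max_left _ _)
        have hbound : ∀ i, |w i - v (k+1) i| ≤ M := by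
          intro i
          rw [hnew i]
          by_cases hi : i ∈ Pplus
          · obtain ⟨h1, _, h3⟩ := (hstep i).1 hi
            rw [abs_of_nonneg h1]
            exact le_trans h3 (le_max_left _ _)
          · exact le_trans ((hstep i).2 hi).2 (le_max_right _ _)
        have hJsum : ∑ i ∈ J, |w i - v (k+1) i| ≤ (s:ℝ) * M := by
          calc ∑ i ∈ J, |w i - v (k+1) i| ≤ ∑ _i ∈ J, M :=
              Finset.sum_le_sum fun i _ => hbound i
            _ = (J.card : ℝ) * M := by rw [Finset.sum_const, nsmul_eq_mul]
            _ ≤ (s:ℝ) * M := by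
                refine mul_le_mul_of_nonneg_right ?_ hM0
                exact_mod_cast hJc
        have hsM : (s:ℝ) * M ≤ L * α k + 2 * (s:ℝ) * (σ * δ) := by
          rw [hM, mul_max_of_nonneg _ _ hs0]
          apply max_le
          · have h1 : ((s:ℝ) * τm + (s:ℝ) * τp) * α k ≤ L * α k :=
              mul_le_mul_of_nonneg_right hsum1 hαk0
            have h2 : (s:ℝ) * ((τm + τp) * α k + 2 * (σ * δ))
                = ((s:ℝ) * τm + (s:ℝ) * τp) * α k + 2 * (s:ℝ) * (σ * δ) := by ring
            linarith
          · have h1 : (2 * (s:ℝ) * τ) * α k ≤ L * α k :=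
              mul_le_mul_of_nonneg_right hsum2 hαk0
            have h2 : (s:ℝ) * (2 * (τ * α k + σ * δ))
                = (2 * (s:ℝ) * τ) * α k + 2 * (s:ℝ) * (σ * δ) := by ring
            linarith
        have hJcsum : ∑ i ∈ Jᶜ, |w i - v (k+1) i| ≤ μ := by
          have h1 : ∑ i ∈ Jᶜ, |w i - v (k+1) i| ≤ ∑ i ∈ Jᶜ, |w i| :=
            Finset.sum_le_sum fun i _ => hallw i
          have h2 : ∑ i ∈ J, |w i| + ∑ i ∈ Jᶜ, |w i| = ∑ i, |w i| :=
            Finset.sum_add_sum_compl J _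
          rw [← hJe] at h2
          linarith [hμ]
        have hsplit : ∑ i, |w i - v (k+1) i|
            = ∑ i ∈ J, |w i - v (k+1) i| + ∑ i ∈ Jᶜ, |w i - v (k+1) i| :=
          (Finset.sum_add_sum_compl J _).symm
        rw [hαk k, hsplit]
        have h2 : 2 * (s:ℝ) * (σ * δ) = 2 * (s:ℝ) * σ * δ := by ring
        linarith [hJsum, hsM, hJcsum]
  -- closed form for α
  have h1L : (0:ℝ) < 1 - L := by linarith
  have hαform : ∀ t, α t = (2 * (s:ℝ) * σ * δ + μ) / (1 - L)
      + L ^ t * (α 0 - (2 * (s:ℝ) * σ * δ + μ) / (1 - L)) := by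
    intro t
    induction t with
    | zero => simp
    | succ k ih =>
      rw [hαk k, ih, pow_succ]
      field_simp
      ring
  intro t
  obtain ⟨hpt, hsum⟩ := key t
  constructor
  · intro i hi
    have := ((hpt i).1 hi).2
    linarith
  · calc ∑ i, |w i - v t i| ≤ α t := hsum
      _ = _ := by rw [hαform t, hα0]
end

section
/- Fix i ∈ {1,…,n}, a real number a, ξ ∈ [0,1), θ ≥ 1, ξ' ∈ (ξ,1), θ' ≥ θ, and set λ = (1+θξ)/(1+θ'ξ') and μ = (1+ξ)/(1+ξ'). Let η = θξ if i ∈ P_+ and η = ξ if i ∈ P_n, and η_+ = θ'ξ' if i ∈ P_+ and η_+ = ξ' if i ∈ P_n. Suppose z ∈ ℝ^n satisfies, for every subset I of {1,…,n} of cardinality s: (a) (1+θξ)·Σ_{j∈P_+∩I} max(z_j − δ_{ij}, 0) + (1+ξ)·Σ_{j∈P_n∩I} |z_j − δ_{ij}| + a ≤ ξ, and (b) (1+θξ)·Σ_{j∈P_+∩I} max(δ_{ij} − z_j, 0) + (1+ξ)·Σ_{j∈P_n∩I} |z_j − δ_{ij}| − a ≤ η, where δ_{ij} = 1 if j = i and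 0 otherwise. Then for every subset I of {1,…,n} of cardinality s: (a') (1+θ'ξ')·Σ_{j∈P_+∩I} max(λz_j − δ_{ij}, 0) + (1+ξ')·Σ_{j∈P_n∩I} |μz_j − δ_{ij}| + a ≤ ξ', and (b') (1+θ'ξ')·Σ_{j∈P_+∩I} max(δ_{ij} − λz_j, 0) + (1+ξ')·Σ_{j∈P_n∩I} |μz_j − δ_{ij}| − a ≤ η_+. -/
open Finset

private lemma key1 (c1 c2 z d : ℝ) (h1 : 0 < c1) (h2 : c1 ≤ c2) (hd0 : 0 ≤ d) (hd1 : d ≤ 1) :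
    c2 * max (c1 / c2 * z - d) 0 ≤ c1 * max (z - d) 0 := by
  have h2' : 0 < c2 := h1.trans_le h2
  have hl0 : 0 < c1 / c2 := div_pos h1 h2'
  have hl1 : c1 / c2 ≤ 1 := (div_le_one h2').mpr h2
  rcases le_total (z - d) 0 with hz | hz
  · rw [max_eq_right hz, max_eq_right, mul_zero, mul_zero]
    nlinarith
  · rw [max_eq_left hz]
    have hmax : max (c1 / c2 * z - d) 0 ≤ c1 / c2 * (z - d) := by
      apply max_le
      · nlinarith
      · positivity
    calc c2 * max (c1 / c2 * z - d) 0 ≤ c2 * (c1 / c2 * (z - d)) := by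
          exact mul_le_mul_of_nonneg_left hmax h2'.le
      _ = c1 * (z - d) := by field_simp

private lemma key2 (c1 c2 z d : ℝ) (h1 : 0 < c1) (h2 : c1 ≤ c2) (hd0 : 0 ≤ d) (hd1 : d ≤ 1) :
    c2 * max (d - c1 / c2 * z) 0 ≤ c1 * max (d - z) 0 + d * (c2 - c1) := by
  have h2' : 0 < c2 := h1.trans_le h2
  have hl0 : 0 < c1 / c2 := div_pos h1 h2'
  have hl1 : c1 / c2 ≤ 1 := (div_le_one h2').mpr h2
  have hmax : max (d - c1 / c2 * z) 0 ≤ c1 / c2 * max (d - z) 0 + d * (1 - c1 / c2) := by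
    apply max_le
    · have hle : c1 / c2 * (d - z) ≤ c1 / c2 * max (d - z) 0 :=
        mul_le_mul_of_nonneg_left (le_max_left _ _) hl0.le
      nlinarith
    · have : 0 ≤ c1 / c2 * max (d - z) 0 := by positivity
      nlinarith
  have := mul_le_mul_of_nonneg_left hmax h2'.le
  calc c2 * max (d - c1 / c2 * z) 0 ≤ c2 * (c1 / c2 * max (d - z) 0 + d * (1 - c1 / c2)) := this
    _ = c1 * max (d - z) 0 + d * (c2 - c1) := by field_simp

private lemma key3 (c1 c2 z d : ℝ) (h1 : 0 < c1) (h2 : c1 ≤ c2) (hd0 : 0 ≤ d) (hd1 : d ≤ 1) :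
    c2 * |c1 / c2 * z - d| ≤ c1 * |z - d| + d * (c2 - c1) := by
  have h2' : 0 < c2 := h1.trans_le h2
  have hl0 : 0 < c1 / c2 := div_pos h1 h2'
  have hl1 : c1 / c2 ≤ 1 := (div_le_one h2').mpr h2
  have habs : |c1 / c2 * z - d| ≤ c1 / c2 * |z - d| + d * (1 - c1 / c2) := by
    have heq : c1 / c2 * z - d = c1 / c2 * (z - d) - d * (1 - c1 / c2) := by ring
    rw [heq]
    calc |c1 / c2 * (z - d) - d * (1 - c1 / c2)| ≤ |c1 / c2 * (z - d)| + |d * (1 - c1 / c2)| :=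
          abs_sub _ _
      _ = c1 / c2 * |z - d| + d * (1 - c1 / c2) := by
          rw [abs_mul, abs_mul, abs_of_nonneg hl0.le, abs_of_nonneg hd0,
            abs_of_nonneg (by linarith : (0:ℝ) ≤ 1 - c1 / c2)]
  have := mul_le_mul_of_nonneg_left habs h2'.le
  calc c2 * |c1 / c2 * z - d| ≤ c2 * (c1 / c2 * |z - d| + d * (1 - c1 / c2)) := this
    _ = c1 * |z - d| + d * (c2 - c1) := by field_simp

private lemma sum_ite_mul {n : ℕ} (S : Finset (Fin n)) (i : Fin n) (c : ℝ) :
    ∑ j ∈ S, (if j = i then (1:ℝ) else 0) * c = if i ∈ S then c else 0 := by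
  simp [ite_mul, Finset.sum_ite_eq']

theorem stmt13 {n : ℕ} (Pplus : Finset (Fin n)) (s : ℕ) (hs : 0 < s) (hsn : s ≤ n)
    (i : Fin n) (a ξ θ ξ' θ' : ℝ)
    (hξ0 : 0 ≤ ξ) (hξ1 : ξ < 1) (hθ : 1 ≤ θ)
    (hξ'1 : ξ < ξ') (hξ'2 : ξ' < 1) (hθ' : θ ≤ θ')
    (z : Fin n → ℝ)
    (h : ∀ I : Finset (Fin n), I.card = s →
      ((1 + θ * ξ) * ∑ j ∈ I ∩ Pplus, max (z j - (if j = i then 1 else 0)) 0 +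
          (1 + ξ) * ∑ j ∈ I ∩ Pplusᶜ, |z j - (if j = i then 1 else 0)| + a ≤ ξ) ∧
      ((1 + θ * ξ) * ∑ j ∈ I ∩ Pplus, max ((if j = i then 1 else 0) - z j) 0 +
          (1 + ξ) * ∑ j ∈ I ∩ Pplusᶜ, |z j - (if j = i then 1 else 0)| - a ≤
            if i ∈ Pplus then θ * ξ else ξ)) :
    ∀ I : Finset (Fin n), I.card = s →
      ((1 + θ' * ξ') * ∑ j ∈ I ∩ Pplus,
            max ((1 + θ * ξ) / (1 + θ' * ξ') * z j - (if j = i then 1 else 0)) 0 +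
          (1 + ξ') * ∑ j ∈ I ∩ Pplusᶜ,
            |(1 + ξ) / (1 + ξ') * z j - (if j = i then 1 else 0)| + a ≤ ξ') ∧
      ((1 + θ' * ξ') * ∑ j ∈ I ∩ Pplus,
            max ((if j = i then 1 else 0) - (1 + θ * ξ) / (1 + θ' * ξ') * z j) 0 +
          (1 + ξ') * ∑ j ∈ I ∩ Pplusᶜ,
            |(1 + ξ) / (1 + ξ') * z j - (if j = i then 1 else 0)| - a ≤
              if i ∈ Pplus then θ' * ξ' else ξ') := by
  intro I hI
  obtain ⟨ha, hb⟩ := h I hI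
  have hc1 : (0:ℝ) < 1 + θ * ξ := by nlinarith
  have hc2 : 1 + θ * ξ ≤ 1 + θ' * ξ' := by nlinarith
  have hm1 : (0:ℝ) < 1 + ξ := by linarith
  have hm2 : 1 + ξ ≤ 1 + ξ' := by linarith
  have hd0 : ∀ j : Fin n, (0:ℝ) ≤ (if j = i then 1 else 0) := by
    intro j; split <;> norm_num
  have hd1 : ∀ j : Fin n, (if j = i then (1:ℝ) else 0) ≤ 1 := by
    intro j; split <;> norm_num
  have hA : (1 + θ' * ξ') * ∑ j ∈ I ∩ Pplus,
        max ((1 + θ * ξ) / (1 + θ' * ξ') * z j - (if j = i then 1 else 0)) 0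
      ≤ (1 + θ * ξ) * ∑ j ∈ I ∩ Pplus, max (z j - (if j = i then 1 else 0)) 0 := by
    rw [Finset.mul_sum, Finset.mul_sum]
    exact Finset.sum_le_sum fun j _ => key1 _ _ _ _ hc1 hc2 (hd0 j) (hd1 j)
  have hB : (1 + ξ') * ∑ j ∈ I ∩ Pplusᶜ, |(1 + ξ) / (1 + ξ') * z j - (if j = i then 1 else 0)|
      ≤ (1 + ξ) * ∑ j ∈ I ∩ Pplusᶜ, |z j - (if j = i then 1 else 0)|
        + (if i ∈ I ∩ Pplusᶜ then ξ' - ξ else 0) := by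
    rw [Finset.mul_sum]
    calc ∑ j ∈ I ∩ Pplusᶜ, (1 + ξ') * |(1 + ξ) / (1 + ξ') * z j - (if j = i then 1 else 0)|
        ≤ ∑ j ∈ I ∩ Pplusᶜ, ((1 + ξ) * |z j - (if j = i then 1 else 0)|
            + (if j = i then (1:ℝ) else 0) * (ξ' - ξ)) := by
          refine Finset.sum_le_sum fun j _ => ?_
          have := key3 (1 + ξ) (1 + ξ') (z j) (if j = i then 1 else 0) hm1 hm2 (hd0 j) (hd1 j)
          have heq : (1 + ξ') - (1 + ξ) = ξ' - ξ := by ring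
          calc (1 + ξ') * |(1 + ξ) / (1 + ξ') * z j - (if j = i then 1 else 0)|
              ≤ (1 + ξ) * |z j - (if j = i then 1 else 0)|
                + (if j = i then (1:ℝ) else 0) * ((1 + ξ') - (1 + ξ)) := this
            _ = _ := by rw [heq]
      _ = (1 + ξ) * ∑ j ∈ I ∩ Pplusᶜ, |z j - (if j = i then 1 else 0)|
            + (if i ∈ I ∩ Pplusᶜ then ξ' - ξ else 0) := by
          rw [Finset.sum_add_distrib, ← Finset.mul_sum, sum_ite_mul]
  have hC : (1 + θ' * ξ') * ∑ j ∈ I ∩ Pplus,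
        max ((if j = i then 1 else 0) - (1 + θ * ξ) / (1 + θ' * ξ') * z j) 0
      ≤ (1 + θ * ξ) * ∑ j ∈ I ∩ Pplus, max ((if j = i then 1 else 0) - z j) 0
        + (if i ∈ I ∩ Pplus then θ' * ξ' - θ * ξ else 0) := by
    rw [Finset.mul_sum]
    calc ∑ j ∈ I ∩ Pplus, (1 + θ' * ξ') *
          max ((if j = i then 1 else 0) - (1 + θ * ξ) / (1 + θ' * ξ') * z j) 0
        ≤ ∑ j ∈ I ∩ Pplus, ((1 + θ * ξ) * max ((if j = i then 1 else 0) - z j) 0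
            + (if j = i then (1:ℝ) else 0) * (θ' * ξ' - θ * ξ)) := by
          refine Finset.sum_le_sum fun j _ => ?_
          have := key2 (1 + θ * ξ) (1 + θ' * ξ') (z j) (if j = i then 1 else 0) hc1 hc2
            (hd0 j) (hd1 j)
          have heq : (1 + θ' * ξ') - (1 + θ * ξ) = θ' * ξ' - θ * ξ := by ring
          calc (1 + θ' * ξ') * max ((if j = i then 1 else 0) - (1 + θ * ξ) / (1 + θ' * ξ') * z j) 0
              ≤ (1 + θ * ξ) * max ((if j = i then 1 else 0) - z j) 0
                + (if j = i then (1:ℝ) else 0) * ((1 + θ' * ξ') - (1 + θ * ξ)) := this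
            _ = _ := by rw [heq]
      _ = (1 + θ * ξ) * ∑ j ∈ I ∩ Pplus, max ((if j = i then 1 else 0) - z j) 0
            + (if i ∈ I ∩ Pplus then θ' * ξ' - θ * ξ else 0) := by
          rw [Finset.sum_add_distrib, ← Finset.mul_sum, sum_ite_mul]
  constructor
  · have he : (if i ∈ I ∩ Pplusᶜ then ξ' - ξ else 0) ≤ ξ' - ξ := by split <;> linarith
    linarith
  · by_cases hiP : i ∈ Pplus
    · have hnot : i ∉ I ∩ Pplusᶜ := by simp [hiP]
      rw [if_neg hnot] at hB
      rw [if_pos hiP] at hb ⊢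
      have he2 : (if i ∈ I ∩ Pplus then θ' * ξ' - θ * ξ else 0) ≤ θ' * ξ' - θ * ξ := by
        split <;> nlinarith
      linarith
    · have hnot : i ∉ I ∩ Pplus := by simp [hiP]
      rw [if_neg hnot] at hC
      rw [if_neg hiP] at hb ⊢
      have he : (if i ∈ I ∩ Pplusᶜ then ξ' - ξ else 0) ≤ ξ' - ξ := by split <;> linarith
      linarith
end

section
/- Let d be a positive integer, m = 2d+1, and n ≥ 4πd. Let A be the m×n real matrix with rows indexed 0,…,m−1 and columns indexed 0,…,n−1 given by A_{ij} = p_i(2πj/n), where p_0(φ) ≡ 1, p_{2i−1}(φ) = cos(iφ), p_{2i}(φ) = sin(iφ) for 1 ≤ i ≤ d. Take P_+ = {0,…,n−1} (all column indices) and P_n = ∅. If A satisfies VSG_s(ξ,θ,ρ,σ) for some ξ < 1, θ ≥ 1 and ρ, σ ≥ 0, then s ≤ 2. -/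
open Finset

-- combinatorial lemma: weighted sum with small [0,1] weights is dominated by a small subset sum
lemma aux_comb {ι : Type*} [DecidableEq ι] (c : ℕ) :
    ∀ (S : Finset ι) (v w : ι → ℝ), (∀ i ∈ S, 0 ≤ v i) → (∀ i ∈ S, 0 ≤ w i) →
    (∀ i ∈ S, w i ≤ 1) → (∑ i ∈ S, w i) ≤ c →
    ∃ J, J ⊆ S ∧ J.card ≤ c ∧ (∑ i ∈ S, w i * v i) ≤ ∑ i ∈ J, v i := by
  induction c with
  | zero =>
    intro S v w hv hw0 hw1 hsum
    refine ⟨∅, by simp, by simp, ?_⟩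
    have hz : ∑ i ∈ S, w i = 0 :=
      le_antisymm (by simpa using hsum) (Finset.sum_nonneg hw0)
    have hall : ∀ i ∈ S, w i = 0 := by
      intro i hi
      have := (Finset.sum_eq_zero_iff_of_nonneg hw0).1 hz i hi
      exact this
    have : ∑ i ∈ S, w i * v i = 0 := Finset.sum_eq_zero (fun i hi => by rw [hall i hi, zero_mul])
    simp [this]
  | succ c ih =>
    intro S v w hv hw0 hw1 hsum
    rcases S.eq_empty_or_nonempty with hS | hS
    · exact ⟨∅, by simp [hS], by simp, by simp [hS]⟩
    obtain ⟨i0, hi0S, hmax⟩ := S.exists_max_image v hS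
    set S' := S.erase i0 with hS'
    have hsub' : S' ⊆ S := Finset.erase_subset _ _
    have hsplit : ∑ j ∈ S', w j * v j + w i0 * v i0 = ∑ j ∈ S, w j * v j :=
      Finset.sum_erase_add S _ hi0S
    have hsplitw : ∑ j ∈ S', w j + w i0 = ∑ j ∈ S, w j :=
      Finset.sum_erase_add S _ hi0S
    have hv0 : 0 ≤ v i0 := hv i0 hi0S
    by_cases hc : ∑ j ∈ S', w j ≤ c
    · obtain ⟨J', hJ'sub, hJ'card, hJ'⟩ := ih S' v w (fun i hi => hv i (hsub' hi))
        (fun i hi => hw0 i (hsub' hi)) (fun i hi => hw1 i (hsub' hi)) hc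
      have hi0J' : i0 ∉ J' := fun hmem => (Finset.mem_erase.1 (hJ'sub hmem)).1 rfl
      refine ⟨insert i0 J', ?_, ?_, ?_⟩
      · exact Finset.insert_subset hi0S (hJ'sub.trans hsub')
      · calc (insert i0 J').card ≤ J'.card + 1 := Finset.card_insert_le _ _
          _ ≤ c + 1 := by omega
      · rw [Finset.sum_insert hi0J']
        have h1 : w i0 * v i0 ≤ v i0 := by
          nlinarith [hw1 i0 hi0S, hw0 i0 hi0S]
        linarith [hJ']
    · push_neg at hc
      have hTw : (0:ℝ) < ∑ j ∈ S', w j := lt_of_le_of_lt (by positivity) hc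
      set Tw := ∑ j ∈ S', w j with hTwdef
      set ρ : ℝ := c / Tw with hρ
      have hρ0 : 0 ≤ ρ := by positivity
      have hρ1 : ρ ≤ 1 := by
        rw [hρ, div_le_one hTw]; exact le_of_lt hc
      obtain ⟨J', hJ'sub, hJ'card, hJ'⟩ := ih S' v (fun j => ρ * w j)
        (fun i hi => hv i (hsub' hi))
        (fun i hi => mul_nonneg hρ0 (hw0 i (hsub' hi)))
        (fun i hi => by
          have h1 := hw1 i (hsub' hi); have h2 := hw0 i (hsub' hi)
          calc ρ * w i ≤ 1 * 1 := mul_le_mul hρ1 h1 h2 zero_le_one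
            _ = 1 := by ring)
        (by
          rw [← Finset.mul_sum, ← hTwdef, hρ, div_mul_cancel₀]
          exact ne_of_gt hTw)
      have hi0J' : i0 ∉ J' := fun hmem => (Finset.mem_erase.1 (hJ'sub hmem)).1 rfl
      refine ⟨insert i0 J', Finset.insert_subset hi0S (hJ'sub.trans hsub'), ?_, ?_⟩
      · calc (insert i0 J').card ≤ J'.card + 1 := Finset.card_insert_le _ _
          _ ≤ c + 1 := by omega
      · rw [Finset.sum_insert hi0J']
        -- ∑_{S'} w v ≤ ∑_{S'} ρ w v + (1-ρ) Tw * v i0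
        have key : ∑ j ∈ S', w j * v j ≤ (∑ j ∈ S', ρ * w j * v j) + (1-ρ) * Tw * v i0 := by
          have : ∑ j ∈ S', w j * v j - ∑ j ∈ S', ρ * w j * v j
              = ∑ j ∈ S', (1-ρ) * (w j * v j) := by
            rw [← Finset.sum_sub_distrib]
            apply Finset.sum_congr rfl; intro j hj; ring
          have hle : ∑ j ∈ S', (1-ρ) * (w j * v j) ≤ ∑ j ∈ S', (1-ρ) * (w j * v i0) := by
            apply Finset.sum_le_sum; intro j hj
            have h1 : v j ≤ v i0 := hmax j (hsub' hj)
            have h2 : 0 ≤ w j := hw0 j (hsub' hj)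
            have h3 : (0:ℝ) ≤ 1 - ρ := by linarith
            nlinarith [mul_nonneg (mul_nonneg h3 h2) (sub_nonneg.2 h1)]
          have heq2 : ∑ j ∈ S', (1-ρ) * (w j * v i0) = (1-ρ) * Tw * v i0 := by
            rw [← Finset.mul_sum, ← Finset.sum_mul, ← hTwdef]; ring
          linarith [this, hle, heq2.le, heq2.ge]
        have hcoef : w i0 + (1-ρ) * Tw ≤ 1 := by
          have : (1-ρ) * Tw = Tw - c := by
            rw [hρ]; field_simp
          rw [this]
          have h5 : Tw + w i0 ≤ (c:ℝ) + 1 := by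
            have := hsum
            push_cast at this
            linarith [hsplitw.ge, hsplitw.le]
          linarith
        calc ∑ j ∈ S, w j * v j = ∑ j ∈ S', w j * v j + w i0 * v i0 := hsplit.symm
          _ ≤ (∑ j ∈ S', ρ * w j * v j) + (1-ρ) * Tw * v i0 + w i0 * v i0 := by linarith
          _ ≤ ∑ j ∈ J', v j + ((1-ρ) * Tw + w i0) * v i0 := by
              have := hJ'; nlinarith [hJ']
          _ ≤ ∑ j ∈ J', v j + v i0 := by
              have hc0 : 0 ≤ (1-ρ) * Tw := mul_nonneg (by linarith) (le_of_lt hTw)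
              nlinarith [hcoef, hv0]
          _ = v i0 + ∑ j ∈ J', v j := by ring


section PhiLemmas
variable {n : ℕ}

lemma aux_normS1_ge (s : ℕ) (y : Fin n → ℝ) (J : Finset (Fin n)) (hJ : J.card ≤ s) :
    ∑ i ∈ J, |y i| ≤ normS1 s y := by
  apply Finset.le_sup' (fun J => ∑ i ∈ J, |y i|)
  simp only [Finset.mem_filter, Finset.mem_powerset]
  exact ⟨Finset.subset_univ J, hJ⟩

lemma aux_Phi_nonneg (s : ℕ) (ξ θ : ℝ) (P : Finset (Fin n)) (x : Fin n → ℝ) :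
    0 ≤ Phi P s ξ θ x := by
  have h := aux_normS1_ge (n := n) s
    (fun i => if i ∈ P then (1 + θ * ξ) * max (x i) 0 else (1 + ξ) * |x i|) ∅ (by simp)
  simpa [Phi] using h

lemma aux_Phi_ge (s : ℕ) (ξ θ : ℝ) (h1 : 0 ≤ 1 + θ*ξ) (x : Fin n → ℝ)
    (J : Finset (Fin n)) (hJ : J.card ≤ s) :
    (1 + θ * ξ) * ∑ j ∈ J, max (x j) 0 ≤ Phi (Finset.univ : Finset (Fin n)) s ξ θ x := by
  have hPhi : Phi (Finset.univ : Finset (Fin n)) s ξ θ x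
      = normS1 s (fun i => (1 + θ * ξ) * max (x i) 0) := by
    unfold Phi
    congr 1
    funext i
    simp
  rw [hPhi, Finset.mul_sum]
  have : ∀ j ∈ J, (1 + θ * ξ) * max (x j) 0 = |(1 + θ * ξ) * max (x j) 0| := by
    intro j _
    exact (abs_of_nonneg (mul_nonneg h1 (le_max_right _ _))).symm
  rw [Finset.sum_congr rfl this]
  exact aux_normS1_ge s _ J hJ

end PhiLemmas

lemma aux_maxneg (x : ℝ) : max (-x) 0 = max x 0 - x := by
  rcases le_total 0 x with h | h
  · rw [max_eq_right (neg_nonpos.2 h), max_eq_left h]; ring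
  · rw [max_eq_left (neg_nonneg.2 h), max_eq_right h]; ring

lemma aux_mul_le (a b : ℝ) : a * b ≤ max a 0 * max b 0 + max (-a) 0 * max (-b) 0 := by
  rcases le_total 0 a with ha | ha <;> rcases le_total 0 b with hb | hb
  · rw [max_eq_left ha, max_eq_left hb, max_eq_right (neg_nonpos.2 ha),
      max_eq_right (neg_nonpos.2 hb)]; nlinarith
  · rw [max_eq_left ha, max_eq_right hb, max_eq_right (neg_nonpos.2 ha),
      max_eq_left (neg_nonneg.2 hb)]; nlinarith
  · rw [max_eq_right ha, max_eq_left hb, max_eq_left (neg_nonneg.2 ha),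
      max_eq_right (neg_nonpos.2 hb)]; nlinarith
  · rw [max_eq_right ha, max_eq_right hb, max_eq_left (neg_nonneg.2 ha),
      max_eq_left (neg_nonneg.2 hb)]; nlinarith




noncomputable def auxZ (n : ℕ) : ℂ := Complex.exp (2 * Real.pi * Complex.I / n)

lemma auxZ_ne (n : ℕ) : auxZ n ≠ 0 := Complex.exp_ne_zero _

lemma auxZ_zpow (n : ℕ) (m : ℤ) :
    (auxZ n)^m = Complex.exp (m * (2 * Real.pi * Complex.I / n)) := by
  rw [auxZ, ← Complex.exp_int_mul]

lemma auxZ_pow_n (n : ℕ) (hn : 0 < n) : (auxZ n)^(n:ℤ) = 1 := by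
  rw [auxZ_zpow]
  have hne : (n:ℂ) ≠ 0 := Nat.cast_ne_zero.2 hn.ne'
  have h : ((n:ℤ):ℂ) * (2 * Real.pi * Complex.I / n) = 2 * Real.pi * Complex.I := by
    push_cast
    field_simp
  rw [h]
  simpa using Complex.exp_two_pi_mul_I

lemma auxZ_zpow_ne_one (n : ℕ) (hn : 0 < n) (m : ℤ) (h0 : m ≠ 0) (habs : m.natAbs < n) :
    (auxZ n)^m ≠ 1 := by
  rw [auxZ_zpow]
  intro hcon
  obtain ⟨k, hk⟩ := Complex.exp_eq_one_iff.1 hcon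
  have hne : (n:ℂ) ≠ 0 := Nat.cast_ne_zero.2 hn.ne'
  have hπ : (2 * (Real.pi:ℂ) * Complex.I) ≠ 0 := by
    simp [Complex.I_ne_zero, Real.pi_ne_zero, Complex.ofReal_ne_zero]
  have : (m:ℂ) = k * n := by
    field_simp at hk
    -- hk : m * (2πI) = k * (2πI) * n   (some arrangement)
    have h2 : (m:ℂ) * (2 * (Real.pi:ℂ) * Complex.I) = (k * n) * (2 * (Real.pi:ℂ) * Complex.I) := by
      push_cast at hk ⊢
      linear_combination (2 * (Real.pi:ℂ) * Complex.I) * hk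
    exact mul_right_cancel₀ hπ h2
  have hmz : m = k * n := by exact_mod_cast this
  rcases eq_or_ne k 0 with hk0 | hk0
  · exact h0 (by simp [hmz, hk0])
  · have : (n:ℤ) ≤ m.natAbs := by
      rw [hmz]
      calc (n:ℤ) = 1 * n := by ring
        _ ≤ |k| * n := by
          have : (1:ℤ) ≤ |k| := Int.one_le_abs (by exact_mod_cast hk0)
          exact mul_le_mul_of_nonneg_right this (by positivity)
        _ = |k * n| := by rw [abs_mul]; simp [abs_of_nonneg (show (0:ℤ) ≤ n by positivity)]
        _ = (k*n).natAbs := (Int.abs_eq_natAbs _)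
    omega
lemma auxGeo (n : ℕ) (hn : 0 < n) (m : ℤ) (h0 : m ≠ 0) (habs : m.natAbs < n) :
    ∑ i : Fin n, (auxZ n)^(m * (i:ℕ)) = 0 := by
  have hterm : ∀ i : Fin n, (auxZ n)^(m * (i:ℕ)) = ((auxZ n)^m)^(i:ℕ) := by
    intro i
    rw [← zpow_natCast ((auxZ n)^m) (i:ℕ), ← zpow_mul]
  simp only [hterm]
  rw [Fin.sum_univ_eq_sum_range (fun i => ((auxZ n)^m)^i) n]
  rw [geom_sum_eq (auxZ_zpow_ne_one n hn m h0 habs)]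
  have : ((auxZ n)^m)^n = 1 := by
    rw [← zpow_natCast ((auxZ n)^m) n, ← zpow_mul, mul_comm, zpow_mul, auxZ_pow_n n hn, one_zpow]
  rw [this]
  simp

noncomputable def auxD (n r1 : ℕ) (u : ℤ) : ℂ :=
  ∑ t ∈ Finset.range r1, (auxZ n)^((t:ℤ) * u)

noncomputable def auxK (n r1 L : ℕ) (u : ℤ) : ℝ :=
  Complex.normSq (auxD n r1 u) * Real.cos (2*Real.pi*L*u/n) / (r1:ℝ)^2

lemma auxZ_conj (n : ℕ) (m : ℤ) :
    (starRingEnd ℂ) ((auxZ n)^m) = (auxZ n)^(-m) := by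
  rw [auxZ_zpow, auxZ_zpow, ← Complex.exp_conj]
  congr 1
  simp [map_mul, map_div₀, Complex.conj_I, map_ofNat]
  ring

lemma auxD_zero (n r1 : ℕ) : auxD n r1 0 = (r1 : ℂ) := by
  simp [auxD]

lemma auxK_zero (n r1 L : ℕ) (hr1 : 1 ≤ r1) : auxK n r1 L 0 = 1 := by
  have : ((r1:ℝ))^2 ≠ 0 := by positivity
  simp [auxK, auxD_zero, Complex.normSq_natCast]
  field_simp

lemma auxZ_abs_pow (n : ℕ) (m : ℤ) : ‖(auxZ n)^m‖ = 1 := by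
  rw [auxZ_zpow]
  have h : (m:ℂ) * (2 * Real.pi * Complex.I / n) = ((2*Real.pi*m/n : ℝ) : ℂ) * Complex.I := by
    push_cast; ring
  rw [h, Complex.norm_exp_ofReal_mul_I]

lemma auxD_abs_le (n r1 : ℕ) (u : ℤ) : ‖auxD n r1 u‖ ≤ r1 := by
  calc ‖auxD n r1 u‖ ≤ ∑ t ∈ Finset.range r1, ‖(auxZ n)^((t:ℤ)*u)‖ :=
        norm_sum_le _ _
    _ = ∑ t ∈ Finset.range r1, 1 := by
        apply Finset.sum_congr rfl; intro t _
        rw [auxZ_abs_pow]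
    _ = r1 := by simp

lemma auxF_le_one (n r1 : ℕ) (hr1 : 1 ≤ r1) (u : ℤ) :
    Complex.normSq (auxD n r1 u) / (r1:ℝ)^2 ≤ 1 := by
  have hrp : (0:ℝ) < (r1:ℝ)^2 := pow_pos (by exact_mod_cast hr1) 2
  rw [div_le_one hrp]
  rw [Complex.normSq_eq_norm_sq]
  have h := auxD_abs_le n r1 u
  have h0 : (0:ℝ) ≤ ‖auxD n r1 u‖ := norm_nonneg _
  nlinarith

lemma auxK_pos_le (n r1 L : ℕ) (hr1 : 1 ≤ r1) (u : ℤ) :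
    max (auxK n r1 L u) 0 ≤ Complex.normSq (auxD n r1 u) / (r1:ℝ)^2 := by
  have hrp : (0:ℝ) < (r1:ℝ)^2 := pow_pos (by exact_mod_cast hr1) 2
  have h1 : auxK n r1 L u ≤ Complex.normSq (auxD n r1 u) / (r1:ℝ)^2 := by
    rw [auxK, div_eq_mul_inv, div_eq_mul_inv (Complex.normSq (auxD n r1 u))]
    apply mul_le_mul_of_nonneg_right _ (inv_nonneg.2 (le_of_lt hrp))
    nlinarith [Real.cos_le_one (2*Real.pi*L*u/n), Complex.normSq_nonneg (auxD n r1 u),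
      Real.neg_one_le_cos (2*Real.pi*L*u/n)]
  exact max_le h1 (div_nonneg (Complex.normSq_nonneg _) (le_of_lt hrp))

lemma auxK_neg_le (n r1 L : ℕ) (hr1 : 1 ≤ r1) (u : ℤ) :
    max (-auxK n r1 L u) 0 ≤ Complex.normSq (auxD n r1 u) / (r1:ℝ)^2 := by
  have hrp : (0:ℝ) < (r1:ℝ)^2 := pow_pos (by exact_mod_cast hr1) 2
  have h1 : -auxK n r1 L u ≤ Complex.normSq (auxD n r1 u) / (r1:ℝ)^2 := by
    rw [auxK, neg_div', div_eq_mul_inv, div_eq_mul_inv (Complex.normSq (auxD n r1 u))]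
    apply mul_le_mul_of_nonneg_right _ (inv_nonneg.2 (le_of_lt hrp))
    nlinarith [Complex.normSq_nonneg (auxD n r1 u), Real.neg_one_le_cos (2*Real.pi*L*u/n)]
  exact max_le h1 (div_nonneg (Complex.normSq_nonneg _) (le_of_lt hrp))

lemma auxK_periodic (n r1 L : ℕ) (hn : 0 < n) (u : ℤ) (z : ℤ) :
    auxK n r1 L (u + n * z) = auxK n r1 L u := by
  have hD : auxD n r1 (u + n*z) = auxD n r1 u := by
    apply Finset.sum_congr rfl
    intro t _
    rw [mul_add, zpow_add₀ (auxZ_ne n)]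
    have : (auxZ n)^((t:ℤ) * (n*z)) = 1 := by
      have : (t:ℤ) * (n*z) = (n:ℤ) * (t*z) := by ring
      rw [this, zpow_mul, auxZ_pow_n n hn, one_zpow]
    rw [this, mul_one]
  have hcos : Real.cos (2*Real.pi*L*(u + n*z)/n) = Real.cos (2*Real.pi*L*u/n) := by
    have hne : (n:ℝ) ≠ 0 := Nat.cast_ne_zero.2 hn.ne'
    have : (2*Real.pi*L*(u + n*z)/n) = 2*Real.pi*L*u/n + (L*z) * (2*Real.pi) := by
      field_simp
    rw [this]
    exact_mod_cast Real.cos_add_int_mul_two_pi _ ((L:ℤ)*z)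
  rw [auxK, auxK, hD]
  congr 2
  push_cast
  exact_mod_cast hcos


-- expansion of (κ u : ℂ) * (2 r1²) as a double sum of powers of ζ
lemma auxK_expand (n r1 L : ℕ) (u : ℤ) :
    ((auxK n r1 L u : ℝ) : ℂ) * (2 * (r1:ℂ)^2) =
      ∑ t ∈ Finset.range r1, ∑ t' ∈ Finset.range r1,
        ((auxZ n)^((((t:ℤ) - t') + L) * u) + (auxZ n)^((((t:ℤ) - t') - L) * u)) := by
  classical
  rcases Nat.eq_zero_or_pos r1 with hr0 | hr1
  · simp [auxK, hr0, auxD]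
  have hζ := auxZ_ne n
  have hcos : ((Real.cos (2*Real.pi*L*u/n) : ℝ) : ℂ)
      = ((auxZ n)^((L:ℤ)*u) + (auxZ n)^(-((L:ℤ)*u))) / 2 := by
    rw [Complex.ofReal_cos, Complex.cos]
    congr 2
    · rw [auxZ_zpow]
      congr 1
      push_cast
      ring
    · rw [auxZ_zpow]
      congr 1
      push_cast
      ring
  have hns : ((Complex.normSq (auxD n r1 u) : ℝ) : ℂ)
      = (auxD n r1 u) * (starRingEnd ℂ) (auxD n r1 u) := (Complex.mul_conj _).symm
  have hconjD : (starRingEnd ℂ) (auxD n r1 u) = ∑ t' ∈ Finset.range r1, (auxZ n)^(-((t':ℤ) * u)) := by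
    rw [auxD, map_sum]
    exact Finset.sum_congr rfl (fun t _ => auxZ_conj n _)
  have hr1ne : ((r1:ℂ))^2 ≠ 0 := pow_ne_zero 2 (Nat.cast_ne_zero.2 hr1.ne')
  -- LHS:
  have lhs_eq : ((auxK n r1 L u : ℝ) : ℂ) * (2 * (r1:ℂ)^2)
      = (auxD n r1 u) * (starRingEnd ℂ) (auxD n r1 u) * ((auxZ n)^((L:ℤ)*u) + (auxZ n)^(-((L:ℤ)*u))) := by
    rw [auxK, Complex.ofReal_div, Complex.ofReal_mul, hns, hcos]
    have hcast : ((((r1:ℝ))^2 : ℝ) : ℂ) = ((r1:ℂ))^2 := by push_cast; ring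
    rw [hcast]
    field_simp
    exact mul_div_cancel_right₀ _ (Nat.cast_ne_zero.2 hr1.ne')
  rw [lhs_eq, hconjD, auxD, Finset.sum_mul_sum]
  rw [Finset.sum_mul]
  apply Finset.sum_congr rfl
  intro t _
  rw [Finset.sum_mul]
  apply Finset.sum_congr rfl
  intro t' _
  rw [mul_add]
  congr 1
  · rw [← zpow_add₀ hζ, ← zpow_add₀ hζ]
    congr 1
    ring
  · rw [← zpow_add₀ hζ, ← zpow_add₀ hζ]
    congr 1
    ring

-- inner geometric sum vanishing
lemma aux_inner (n : ℕ) (hn : 0 < n) (M q : ℤ) (j₀ : ℤ)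
    (h0 : M + q ≠ 0) (habs : (M+q).natAbs < n) :
    ∑ i : Fin n, (auxZ n)^(M * ((i:ℕ) - j₀)) * (auxZ n)^(q * (i:ℕ)) = 0 := by
  have hζ := auxZ_ne n
  have hterm : ∀ i : Fin n, (auxZ n)^(M * ((i:ℕ) - j₀)) * (auxZ n)^(q * (i:ℕ))
      = (auxZ n)^(-(M * j₀)) * (auxZ n)^((M+q) * (i:ℕ)) := by
    intro i
    rw [← zpow_add₀ hζ, ← zpow_add₀ hζ]
    congr 1
    ring
  simp only [hterm]
  rw [← Finset.mul_sum, auxGeo n hn (M+q) h0 habs, mul_zero]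

-- the master orthogonality identity
lemma aux_master (n d r1 L : ℕ) (hn : 0 < n) (hL : L = d + r1) (h2 : 2*d + 2*r1 ≤ n)
    (hr1 : 1 ≤ r1) (q : ℤ) (hq : q.natAbs ≤ d) (j₀ : ℤ) :
    ∑ i : Fin n, ((auxK n r1 L ((i:ℕ) - j₀) : ℝ) : ℂ) * (auxZ n)^(q * (i:ℕ)) = 0 := by
  have hr1ne : (2 * ((r1:ℂ))^2) ≠ 0 := by
    exact mul_ne_zero two_ne_zero (pow_ne_zero 2 (Nat.cast_ne_zero.2 (by omega)))
  apply mul_right_cancel₀ hr1ne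
  rw [zero_mul]
  have step1 : (∑ i : Fin n, ((auxK n r1 L ((i:ℕ) - j₀) : ℝ) : ℂ) * (auxZ n)^(q * (i:ℕ))) * (2 * ((r1:ℂ))^2)
      = ∑ i : Fin n, ∑ t ∈ Finset.range r1, ∑ t' ∈ Finset.range r1,
          ((auxZ n)^((((t:ℤ) - t') + L) * ((i:ℕ) - j₀)) * (auxZ n)^(q * (i:ℕ))
            + (auxZ n)^((((t:ℤ) - t') - L) * ((i:ℕ) - j₀)) * (auxZ n)^(q * (i:ℕ))) := by
    rw [Finset.sum_mul]
    apply Finset.sum_congr rfl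
    intro i _
    have : ((auxK n r1 L ((i:ℕ) - j₀) : ℝ) : ℂ) * (auxZ n)^(q * (i:ℕ)) * (2 * ((r1:ℂ))^2)
        = (((auxK n r1 L ((i:ℕ) - j₀) : ℝ) : ℂ) * (2 * ((r1:ℂ))^2)) * (auxZ n)^(q * (i:ℕ)) := by
      ring
    rw [this, auxK_expand]
    rw [Finset.sum_mul]
    apply Finset.sum_congr rfl
    intro t _
    rw [Finset.sum_mul]
    apply Finset.sum_congr rfl
    intro t' _
    rw [add_mul]
  rw [step1, Finset.sum_comm]
  apply Finset.sum_eq_zero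
  intro t ht
  rw [Finset.sum_comm]
  apply Finset.sum_eq_zero
  intro t' ht'
  rw [Finset.sum_add_distrib]
  have htb : (t:ℤ) ≤ r1 - 1 := by
    have := Finset.mem_range.1 ht; omega
  have ht0 : (0:ℤ) ≤ t := Int.ofNat_nonneg t
  have htb' : (t':ℤ) ≤ r1 - 1 := by
    have := Finset.mem_range.1 ht'; omega
  have ht0' : (0:ℤ) ≤ t' := Int.ofNat_nonneg t'
  have hLz : (L:ℤ) = (d:ℤ) + (r1:ℤ) := by exact_mod_cast hL
  have h2z : 2*(d:ℤ) + 2*(r1:ℤ) ≤ (n:ℤ) := by exact_mod_cast h2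
  have e1 : ∑ x : Fin n, (auxZ n)^(((t:ℤ) - t' + L) * ((x:ℕ) - j₀)) * (auxZ n)^(q * (x:ℕ)) = 0 := by
    apply aux_inner n hn _ q j₀ (by omega) (by omega)
  have e2 : ∑ x : Fin n, (auxZ n)^(((t:ℤ) - t' - L) * ((x:ℕ) - j₀)) * (auxZ n)^(q * (x:ℕ)) = 0 := by
    apply aux_inner n hn _ q j₀ (by omega) (by omega)
  rw [e1, e2, add_zero]

lemma aux_sumD (n r1 : ℕ) (hn : 0 < n) (hr1n : r1 ≤ n) :
    ∑ u : Fin n, Complex.normSq (auxD n r1 ((u:ℕ):ℤ)) = (n:ℝ) * r1 := by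
  have hζ := auxZ_ne n
  have key : ∑ u : Fin n, ((Complex.normSq (auxD n r1 ((u:ℕ):ℤ)) : ℝ) : ℂ) = ((n:ℝ) * r1 : ℝ) := by
    have expand : ∀ u : Fin n, ((Complex.normSq (auxD n r1 ((u:ℕ):ℤ)) : ℝ) : ℂ)
        = ∑ t ∈ Finset.range r1, ∑ t' ∈ Finset.range r1, (auxZ n)^(((t:ℤ) - t') * ((u:ℕ):ℤ)) := by
      intro u
      rw [← Complex.mul_conj]
      have hconjD : (starRingEnd ℂ) (auxD n r1 ((u:ℕ):ℤ))
          = ∑ t' ∈ Finset.range r1, (auxZ n)^(-((t':ℤ) * ((u:ℕ):ℤ))) := by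
        rw [auxD, map_sum]
        exact Finset.sum_congr rfl (fun t _ => auxZ_conj n _)
      rw [hconjD, auxD, Finset.sum_mul_sum]
      apply Finset.sum_congr rfl; intro t _
      apply Finset.sum_congr rfl; intro t' _
      rw [← zpow_add₀ hζ]
      congr 1
      ring
    simp only [expand]
    rw [Finset.sum_comm]
    have inner : ∀ t ∈ Finset.range r1, ∑ t' ∈ Finset.range r1,
        (∑ u : Fin n, (auxZ n)^(((t:ℤ) - t') * ((u:ℕ):ℤ)))
        = (n:ℂ) := by
      intro t ht
      have : ∀ t' ∈ Finset.range r1, ∑ u : Fin n, (auxZ n)^(((t:ℤ) - t') * ((u:ℕ):ℤ))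
          = if t' = t then (n:ℂ) else 0 := by
        intro t' ht'
        by_cases h : t' = t
        · subst h
          simp
        · rw [if_neg h]
          apply auxGeo n hn
          · omega
          · have h1 := Finset.mem_range.1 ht
            have h2 := Finset.mem_range.1 ht'
            omega
      rw [Finset.sum_congr rfl this]
      simp [Finset.mem_range.1 ht]
    have hper : ∀ t ∈ Finset.range r1, (∑ u : Fin n, ∑ t' ∈ Finset.range r1,
        (auxZ n)^(((t:ℤ) - t') * ((u:ℕ):ℤ))) = (n:ℂ) := by
      intro t ht
      rw [Finset.sum_comm]
      exact inner t ht
    rw [Finset.sum_congr rfl hper]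
    simp
    push_cast
    ring
  have := key
  rw [← Complex.ofReal_sum] at this
  exact_mod_cast this


-- real/imag parts of powers of ζ
lemma auxZ_re (n : ℕ) (m : ℤ) : ((auxZ n)^m).re = Real.cos (2*Real.pi*m/n) := by
  rw [auxZ_zpow]
  have h : (m:ℂ) * (2 * Real.pi * Complex.I / n) = ((2*Real.pi*m/n : ℝ) : ℂ) * Complex.I := by
    push_cast; ring
  rw [h, Complex.exp_ofReal_mul_I_re]

lemma auxZ_im (n : ℕ) (m : ℤ) : ((auxZ n)^m).im = Real.sin (2*Real.pi*m/n) := by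
  rw [auxZ_zpow]
  have h : (m:ℂ) * (2 * Real.pi * Complex.I / n) = ((2*Real.pi*m/n : ℝ) : ℂ) * Complex.I := by
    push_cast; ring
  rw [h, Complex.exp_ofReal_mul_I_im]

-- real-valued versions of the master identity
lemma aux_master_re (n d r1 L : ℕ) (hn : 0 < n) (hL : L = d + r1) (h2 : 2*d + 2*r1 ≤ n)
    (hr1 : 1 ≤ r1) (q : ℤ) (hq : q.natAbs ≤ d) (j₀ : ℤ) :
    ∑ i : Fin n, auxK n r1 L ((i:ℕ) - j₀) * Real.cos (2*Real.pi*(q*(i:ℕ))/n) = 0 := by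
  have h := aux_master n d r1 L hn hL h2 hr1 q hq j₀
  have h2' := congrArg Complex.re h
  rw [Complex.re_sum] at h2'
  simp at h2'
  simp only [auxZ_re] at h2'
  convert h2' using 2 with i
  push_cast
  ring_nf

lemma aux_master_im (n d r1 L : ℕ) (hn : 0 < n) (hL : L = d + r1) (h2 : 2*d + 2*r1 ≤ n)
    (hr1 : 1 ≤ r1) (q : ℤ) (hq : q.natAbs ≤ d) (j₀ : ℤ) :
    ∑ i : Fin n, auxK n r1 L ((i:ℕ) - j₀) * Real.sin (2*Real.pi*(q*(i:ℕ))/n) = 0 := by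
  have h := aux_master n d r1 L hn hL h2 hr1 q hq j₀
  have h2' := congrArg Complex.im h
  rw [Complex.im_sum] at h2'
  simp at h2'
  simp only [auxZ_im] at h2'
  convert h2' using 2 with i
  push_cast
  ring_nf

-- reindexing sums over the cyclic grid
lemma aux_shift (n : ℕ) [NeZero n] (ψ : ℤ → ℝ) (hper : ∀ u z, ψ (u + n*z) = ψ u) (i : Fin n) :
    ∑ j : Fin n, ψ (((i:ℕ):ℤ) - ((j:ℕ):ℤ)) = ∑ u : Fin n, ψ ((u:ℕ)) := by
  apply Fintype.sum_equiv (Equiv.subLeft i)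
  intro j
  show ψ (((i:ℕ):ℤ) - ((j:ℕ):ℤ)) = ψ (((i - j : Fin n):ℕ):ℤ)
  have hj : (j:ℕ) < n := j.isLt
  have hi : (i:ℕ) < n := i.isLt
  have hsub : ((i - j : Fin n):ℕ) = ((i:ℕ) + (n - (j:ℕ))) % n := by
    rw [Fin.sub_def]
    show (n - (j:ℕ) + (i:ℕ)) % n = ((i:ℕ) + (n - (j:ℕ))) % n
    rw [Nat.add_comm]
  set a : ℕ := (i:ℕ) + (n - (j:ℕ)) with ha
  have hmd : (a % n) + n * (a / n) = a := Nat.mod_add_div a n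
  have key : ((i:ℕ):ℤ) - ((j:ℕ):ℤ) = (((i - j : Fin n):ℕ):ℤ) + (n:ℤ) * (((a/n : ℕ):ℤ) - 1) := by
    rw [hsub]
    have h1 : ((a % n : ℕ):ℤ) + (n:ℤ) * ((a / n : ℕ):ℤ) = (a:ℤ) := by exact_mod_cast hmd
    have h2 : (a:ℤ) = ((i:ℕ):ℤ) + ((n:ℤ) - ((j:ℕ):ℤ)) := by
      rw [ha]
      push_cast [Nat.cast_sub (le_of_lt hj)]
      ring
    have h3 : ((n:ℕ):ℤ) = (n:ℤ) := rfl
    nlinarith [h1, h2]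
  rw [key, hper]


lemma aux_rowOrth (n d r1 L : ℕ) (hn : 0 < n) (hL : L = d + r1) (h2 : 2*d + 2*r1 ≤ n)
    (hr1 : 1 ≤ r1)
    (A : Matrix (Fin (2*d+1)) (Fin n) ℝ)
    (hA : ∀ (i : Fin (2 * d + 1)) (j : Fin n),
      A i j =
        if (i : ℕ) = 0 then 1
        else if (i : ℕ) % 2 = 1 then
          Real.cos (((((i : ℕ) + 1) / 2 : ℕ) : ℝ) * (2 * Real.pi * (j : ℕ) / (n : ℕ)))
        else Real.sin ((((i : ℕ) / 2 : ℕ) : ℝ) * (2 * Real.pi * (j : ℕ) / (n : ℕ))))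
    (k : Fin (2*d+1)) (j₀ : Fin n) :
    ∑ i : Fin n, auxK n r1 L (((i:ℕ):ℤ) - ((j₀:ℕ):ℤ)) * A k i = 0 := by
  by_cases h0 : (k:ℕ) = 0
  · have hm := aux_master_re n d r1 L hn hL h2 hr1 0 (by simp) ((j₀:ℕ):ℤ)
    rw [← hm]
    apply Finset.sum_congr rfl
    intro i _
    rw [hA k i, if_pos h0]
    norm_num
  · by_cases h1 : (k:ℕ) % 2 = 1
    · have hqd : (((((k:ℕ)+1)/2 : ℕ) : ℤ)).natAbs ≤ d := by
        have := k.isLt; omega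
      have hm := aux_master_re n d r1 L hn hL h2 hr1 ((((k:ℕ)+1)/2 : ℕ) : ℤ) hqd ((j₀:ℕ):ℤ)
      rw [← hm]
      apply Finset.sum_congr rfl
      intro i _
      rw [hA k i, if_neg h0, if_pos h1]
      congr 1
      rw [Int.cast_natCast]
      push_cast
      ring
    · have hqd : ((((k:ℕ)/2 : ℕ) : ℤ)).natAbs ≤ d := by
        have := k.isLt; omega
      have hm := aux_master_im n d r1 L hn hL h2 hr1 ((((k:ℕ)/2 : ℕ) : ℤ)) hqd ((j₀:ℕ):ℤ)
      rw [← hm]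
      apply Finset.sum_congr rfl
      intro i _
      rw [hA k i, if_neg h0, if_neg h1]
      congr 1
      rw [Int.cast_natCast]
      push_cast
      ring


set_option maxHeartbeats 1000000 in
theorem stmt14 {d n : ℕ} (hd : 0 < d) (hn : (4 : ℝ) * Real.pi * d ≤ n)
    (A : Matrix (Fin (2 * d + 1)) (Fin n) ℝ)
    (hA : ∀ (i : Fin (2 * d + 1)) (j : Fin n),
      A i j =
        if (i : ℕ) = 0 then 1
        else if (i : ℕ) % 2 = 1 then
          Real.cos (((((i : ℕ) + 1) / 2 : ℕ) : ℝ) * (2 * Real.pi * (j : ℕ) / (n : ℕ)))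
        else Real.sin ((((i : ℕ) / 2 : ℕ) : ℝ) * (2 * Real.pi * (j : ℕ) / (n : ℕ))))
    (s : ℕ) (ξ θ ρ σ : ℝ) (hξ : ξ < 1) (hθ : 1 ≤ θ) (hρ : 0 ≤ ρ) (hσ : 0 ≤ σ)
    (N : (Fin (2 * d + 1) → ℝ) → ℝ) (hN : IsNorm N)
    (h : VSG A (Finset.univ : Finset (Fin n)) s ξ θ ρ σ N) :
    s ≤ 2 := by
  by_contra hs
  push_neg at hs
  have hs3 : 3 ≤ s := hs
  obtain ⟨Y, v, hC1, _hC2, hC3, _, _⟩ := h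
  have hπ := Real.pi_gt_three
  have hn12 : 12*d + 1 ≤ n := by
    have hd' : (0:ℝ) < d := by exact_mod_cast hd
    have h12 : (12*d : ℝ) < (n:ℝ) := by nlinarith
    have : 12*d < n := by exact_mod_cast h12
    omega
  have hn0 : 0 < n := by omega
  haveI : NeZero n := ⟨by omega⟩
  set r1 : ℕ := (n+2)/3 with hr1def
  set L : ℕ := d + r1 with hLdef
  have hr1 : 1 ≤ r1 := by omega
  have h2 : 2*d + 2*r1 ≤ n := by omega
  have h3 : n ≤ 3*r1 := by omega
  have hr1n : r1 ≤ n := by omega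
  -- ξ is nonnegative
  have hξ0 : 0 ≤ ξ := by
    set i₀ : Fin n := ⟨0, hn0⟩
    have ha := hC1 i₀
    have hb := hC3 i₀ (Finset.mem_univ _)
    have h1 := aux_Phi_nonneg s ξ θ (Finset.univ : Finset (Fin n))
      (fun j => -((1 - Y.transpose * A : Matrix (Fin n) (Fin n) ℝ) j i₀))
    have h2' := aux_Phi_nonneg s ξ θ (Finset.univ : Finset (Fin n))
      (fun j => ((1 - Y.transpose * A : Matrix (Fin n) (Fin n) ℝ) j i₀))
    nlinarith
  have h1θξ : (0:ℝ) < 1 + θ*ξ := by nlinarith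
  -- κ bounds
  have hκ1p : ∀ u : ℤ, max (auxK n r1 L u) 0 ≤ 1 :=
    fun u => le_trans (auxK_pos_le n r1 L hr1 u) (auxF_le_one n r1 hr1 u)
  have hκ1m : ∀ u : ℤ, max (-(auxK n r1 L u)) 0 ≤ 1 :=
    fun u => le_trans (auxK_neg_le n r1 L hr1 u) (auxF_le_one n r1 hr1 u)
  -- total mass of positive part of κ over the grid
  have hFsum : ∑ u : Fin n, Complex.normSq (auxD n r1 ((u:ℕ):ℤ)) / (r1:ℝ)^2 = (n:ℝ)/r1 := by
    rw [← Finset.sum_div, aux_sumD n r1 hn0 hr1n]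
    have hr1ne : ((r1:ℝ)) ≠ 0 := Nat.cast_ne_zero.2 (by omega)
    field_simp
  have hSp : ∑ u : Fin n, max (auxK n r1 L ((u:ℕ):ℤ)) 0 ≤ 3 := by
    calc ∑ u : Fin n, max (auxK n r1 L ((u:ℕ):ℤ)) 0
        ≤ ∑ u : Fin n, Complex.normSq (auxD n r1 ((u:ℕ):ℤ)) / (r1:ℝ)^2 :=
          Finset.sum_le_sum (fun u _ => auxK_pos_le n r1 L hr1 _)
      _ = (n:ℝ)/r1 := hFsum
      _ ≤ 3 := by
          rw [div_le_iff₀ (by exact_mod_cast hr1 : (0:ℝ) < (r1:ℝ))]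
          have h3' : (n:ℝ) ≤ 3*(r1:ℝ) := by exact_mod_cast h3
          linarith
  have hκ0sum : ∑ u : Fin n, auxK n r1 L ((u:ℕ):ℤ) = 0 := by
    have hm := aux_master_re n d r1 L hn0 hLdef h2 hr1 0 (by simp) 0
    have : ∀ u : Fin n, auxK n r1 L (((u:ℕ):ℤ) - 0) * Real.cos (2*Real.pi*((0:ℤ)*((u:ℕ):ℤ))/n)
        = auxK n r1 L ((u:ℕ):ℤ) := by
      intro u
      norm_num
    rw [← Finset.sum_congr rfl (fun u _ => this u)]
    exact hm
  have hSm : ∑ u : Fin n, max (-(auxK n r1 L ((u:ℕ):ℤ))) 0 ≤ 3 := by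
    have heq : ∀ u : Fin n, max (-(auxK n r1 L ((u:ℕ):ℤ))) 0
        = max (auxK n r1 L ((u:ℕ):ℤ)) 0 - auxK n r1 L ((u:ℕ):ℤ) :=
      fun u => aux_maxneg _
    rw [Finset.sum_congr rfl (fun u _ => heq u), Finset.sum_sub_distrib, hκ0sum, sub_zero]
    exact hSp
  -- periodicity of parts
  have hperp : ∀ u z : ℤ, max (auxK n r1 L (u + n*z)) 0 = max (auxK n r1 L u) 0 := by
    intro u z; rw [auxK_periodic n r1 L hn0 u z]
  have hperm : ∀ u z : ℤ, max (-(auxK n r1 L (u + n*z))) 0 = max (-(auxK n r1 L u)) 0 := by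
    intro u z; rw [auxK_periodic n r1 L hn0 u z]
  -- the key column inequality
  have key : ∀ i : Fin n,
      (1 + θ*ξ) * (∑ j : Fin n, auxK n r1 L (((i:ℕ):ℤ) - ((j:ℕ):ℤ))
          * (1 - Y.transpose * A : Matrix (Fin n) (Fin n) ℝ) j i) ≤ (1+θ)*ξ := by
    intro i
    set colE : Fin n → ℝ := fun j => (1 - Y.transpose * A : Matrix (Fin n) (Fin n) ℝ) j i with hcolE
    set vp : Fin n → ℝ := fun j => max (colE j) 0 with hvp
    set vm : Fin n → ℝ := fun j => max (-(colE j)) 0 with hvm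
    set wp : Fin n → ℝ := fun j => max (auxK n r1 L (((i:ℕ):ℤ) - ((j:ℕ):ℤ))) 0 with hwp
    set wm : Fin n → ℝ := fun j => max (-(auxK n r1 L (((i:ℕ):ℤ) - ((j:ℕ):ℤ)))) 0 with hwm
    -- weight budgets over the erased set
    have hshift_p : ∑ j : Fin n, wp j = ∑ u : Fin n, max (auxK n r1 L ((u:ℕ):ℤ)) 0 :=
      aux_shift n (fun u => max (auxK n r1 L u) 0) hperp i
    have hshift_m : ∑ j : Fin n, wm j = ∑ u : Fin n, max (-(auxK n r1 L ((u:ℕ):ℤ))) 0 :=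
      aux_shift n (fun u => max (-(auxK n r1 L u)) 0) hperm i
    have hwpi : wp i = 1 := by
      rw [hwp]
      simp only [sub_self, auxK_zero n r1 L hr1]
      exact max_eq_left zero_le_one
    have hwmi : wm i = 0 := by
      rw [hwm]
      simp only [sub_self, auxK_zero n r1 L hr1]
      exact max_eq_right (by norm_num)
    have hbp : ∑ j ∈ Finset.univ.erase i, wp j ≤ 2 := by
      have hh := Finset.sum_erase_add Finset.univ wp (Finset.mem_univ i)
      have := hshift_p ▸ hSp
      linarith [hh, hwpi]
    have hbm : ∑ j ∈ Finset.univ.erase i, wm j ≤ 3 := by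
      have hh := Finset.sum_erase_add Finset.univ wm (Finset.mem_univ i)
      have := hshift_m ▸ hSm
      linarith [hh, hwmi]
    -- apply the combinatorial lemma
    obtain ⟨J₁, hJ₁sub, hJ₁card, hJ₁⟩ := aux_comb 2 (Finset.univ.erase i) vp wp
      (fun j _ => le_max_right _ _) (fun j _ => le_max_right _ _)
      (fun j _ => hκ1p _) (by exact_mod_cast hbp)
    obtain ⟨J₂, hJ₂sub, hJ₂card, hJ₂⟩ := aux_comb 3 (Finset.univ.erase i) vm wm
      (fun j _ => le_max_right _ _) (fun j _ => le_max_right _ _)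
      (fun j _ => hκ1m _) (by exact_mod_cast hbm)
    have hiJ₁ : i ∉ J₁ := fun hmem => (Finset.mem_erase.1 (hJ₁sub hmem)).1 rfl
    -- pointwise bound on the erased part
    have hpoint : ∑ j ∈ Finset.univ.erase i, auxK n r1 L (((i:ℕ):ℤ) - ((j:ℕ):ℤ)) * colE j
        ≤ (∑ j ∈ Finset.univ.erase i, wp j * vp j) + ∑ j ∈ Finset.univ.erase i, wm j * vm j := by
      rw [← Finset.sum_add_distrib]
      apply Finset.sum_le_sum
      intro j _
      exact aux_mul_le _ _
    -- swap factors: aux_comb gives ∑ w*v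
    have hJ₁' : ∑ j ∈ Finset.univ.erase i, wp j * vp j ≤ ∑ j ∈ J₁, vp j := hJ₁
    have hJ₂' : ∑ j ∈ Finset.univ.erase i, wm j * vm j ≤ ∑ j ∈ J₂, vm j := hJ₂
    have hsplit : (∑ j ∈ Finset.univ.erase i, auxK n r1 L (((i:ℕ):ℤ) - ((j:ℕ):ℤ)) * colE j)
        + auxK n r1 L (((i:ℕ):ℤ) - ((i:ℕ):ℤ)) * colE i
        = ∑ j : Fin n, auxK n r1 L (((i:ℕ):ℤ) - ((j:ℕ):ℤ)) * colE j :=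
      Finset.sum_erase_add Finset.univ
        (fun j : Fin n => auxK n r1 L (((i:ℕ):ℤ) - ((j:ℕ):ℤ)) * colE j) (Finset.mem_univ i)
    have hfi : auxK n r1 L (((i:ℕ):ℤ) - ((i:ℕ):ℤ)) * colE i = colE i := by
      rw [sub_self, auxK_zero n r1 L hr1, one_mul]
    have hEii : colE i ≤ vp i := le_max_left _ _
    have main_le : ∑ j : Fin n, auxK n r1 L (((i:ℕ):ℤ) - ((j:ℕ):ℤ)) * colE j
        ≤ (∑ j ∈ insert i J₁, vp j) + ∑ j ∈ J₂, vm j := by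
      rw [Finset.sum_insert hiJ₁]
      have := hsplit
      linarith [hpoint, hJ₁', hJ₂', hEii, hfi]
    -- compare with Phi via the certificate
    have hφ1 : (1 + θ*ξ) * ∑ j ∈ insert i J₁, vp j
        ≤ Phi (Finset.univ : Finset (Fin n)) s ξ θ colE := by
      apply aux_Phi_ge s ξ θ (le_of_lt h1θξ) colE
      calc (insert i J₁).card ≤ J₁.card + 1 := Finset.card_insert_le _ _
        _ ≤ 3 := by omega
        _ ≤ s := hs3
    have hφ2 : (1 + θ*ξ) * ∑ j ∈ J₂, vm j
        ≤ Phi (Finset.univ : Finset (Fin n)) s ξ θ (fun j => -(colE j)) := by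
      apply aux_Phi_ge s ξ θ (le_of_lt h1θξ) (fun j => -(colE j))
      omega
    have hc1 := hC1 i
    have hc3 := hC3 i (Finset.mem_univ i)
    have hvpnn : (0:ℝ) ≤ ∑ j ∈ insert i J₁, vp j :=
      Finset.sum_nonneg (fun j _ => le_max_right _ _)
    have hvmnn : (0:ℝ) ≤ ∑ j ∈ J₂, vm j :=
      Finset.sum_nonneg (fun j _ => le_max_right _ _)
    calc (1 + θ*ξ) * (∑ j : Fin n, auxK n r1 L (((i:ℕ):ℤ) - ((j:ℕ):ℤ)) * colE j)
        ≤ (1 + θ*ξ) * ((∑ j ∈ insert i J₁, vp j) + ∑ j ∈ J₂, vm j) :=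
          mul_le_mul_of_nonneg_left main_le (le_of_lt h1θξ)
      _ = (1 + θ*ξ) * ∑ j ∈ insert i J₁, vp j + (1 + θ*ξ) * ∑ j ∈ J₂, vm j := by ring
      _ ≤ Phi (Finset.univ : Finset (Fin n)) s ξ θ colE
            + Phi (Finset.univ : Finset (Fin n)) s ξ θ (fun j => -(colE j)) := by
          linarith [hφ1, hφ2]
      _ ≤ (1+θ)*ξ := by
          rw [hcolE]
          linarith [hc1, hc3]
  -- the global identity
  have hglob : ∑ i : Fin n, (∑ j : Fin n, auxK n r1 L (((i:ℕ):ℤ) - ((j:ℕ):ℤ))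
      * (1 - Y.transpose * A : Matrix (Fin n) (Fin n) ℝ) j i) = (n:ℝ) := by
    have hE : ∀ (i j : Fin n), (1 - Y.transpose * A : Matrix (Fin n) (Fin n) ℝ) j i
        = (if j = i then (1:ℝ) else 0) - ∑ k, Y k j * A k i := by
      intro i j
      simp [Matrix.sub_apply, Matrix.one_apply, Matrix.mul_apply, Matrix.transpose_apply]
    have step1 : ∀ i : Fin n, ∑ j : Fin n, auxK n r1 L (((i:ℕ):ℤ) - ((j:ℕ):ℤ))
        * (1 - Y.transpose * A : Matrix (Fin n) (Fin n) ℝ) j i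
        = 1 - ∑ j : Fin n, ∑ k, auxK n r1 L (((i:ℕ):ℤ) - ((j:ℕ):ℤ)) * (Y k j * A k i) := by
      intro i
      have : ∀ j : Fin n, auxK n r1 L (((i:ℕ):ℤ) - ((j:ℕ):ℤ))
          * (1 - Y.transpose * A : Matrix (Fin n) (Fin n) ℝ) j i
          = (if j = i then auxK n r1 L (((i:ℕ):ℤ) - ((j:ℕ):ℤ)) else 0)
            - ∑ k, auxK n r1 L (((i:ℕ):ℤ) - ((j:ℕ):ℤ)) * (Y k j * A k i) := by
        intro j
        rw [hE i j, mul_sub, Finset.mul_sum]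
        congr 1
        split
        · rw [mul_one]
        · rw [mul_zero]
      rw [Finset.sum_congr rfl (fun j _ => this j), Finset.sum_sub_distrib]
      congr 1
      rw [Finset.sum_ite_eq' Finset.univ i
        (fun j => auxK n r1 L (((i:ℕ):ℤ) - ((j:ℕ):ℤ)))]
      simp [auxK_zero n r1 L hr1]
    have step2 : ∀ i : Fin n, ∑ j : Fin n, ∑ k, auxK n r1 L (((i:ℕ):ℤ) - ((j:ℕ):ℤ))
        * (Y k j * A k i) = ∑ k, ∑ j : Fin n, Y k j
          * (auxK n r1 L (((i:ℕ):ℤ) - ((j:ℕ):ℤ)) * A k i) := by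
      intro i
      rw [Finset.sum_comm]
      apply Finset.sum_congr rfl; intro k _
      apply Finset.sum_congr rfl; intro j _
      ring
    -- sum over i and swap
    rw [Finset.sum_congr rfl (fun i _ => step1 i), Finset.sum_sub_distrib]
    have hone : ∑ _i : Fin n, (1:ℝ) = (n:ℝ) := by simp
    rw [hone]
    have hzero : ∑ i : Fin n, ∑ j : Fin n, ∑ k, auxK n r1 L (((i:ℕ):ℤ) - ((j:ℕ):ℤ))
        * (Y k j * A k i) = 0 := by
      rw [Finset.sum_congr rfl (fun i _ => step2 i), Finset.sum_comm]
      apply Finset.sum_eq_zero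
      intro k _
      rw [Finset.sum_comm]
      apply Finset.sum_eq_zero
      intro j _
      rw [← Finset.mul_sum]
      have : ∑ i : Fin n, auxK n r1 L (((i:ℕ):ℤ) - ((j:ℕ):ℤ)) * A k i = 0 :=
        aux_rowOrth n d r1 L hn0 hLdef h2 hr1 A hA k j
      rw [this, mul_zero]
    rw [hzero, sub_zero]
  -- conclude
  have hfinal : (1 + θ*ξ) * (n:ℝ) ≤ ((1+θ)*ξ) * n := by
    have hsum := Finset.sum_le_sum (fun i (_ : i ∈ (Finset.univ : Finset (Fin n))) => key i)
    rw [← Finset.mul_sum, hglob] at hsum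
    have : ∑ _i : Fin n, (1+θ)*ξ = ((1+θ)*ξ) * n := by
      rw [Finset.sum_const, Finset.card_univ, Fintype.card_fin, nsmul_eq_mul]
      ring
    linarith [this ▸ hsum]
  have hnpos : (0:ℝ) < n := by exact_mod_cast hn0
  nlinarith [hfinal, hnpos, hξ]
end

section
/- Let {1,…,n} be partitioned into disjoint sets P_+ and P_n, let θ ≥ 1, and define Ψ_θ(x) = Σ_{i∈P_+} max(−x_i, θ·x_i) + Σ_{i∈P_n} |x_i| for x ∈ ℝ^n. Then the set {x ∈ ℝ^n : Ψ_θ(x) ≤ 1} equals the convex hull of the finite set consisting of the vectors e_i and −e_i for i ∈ P_n, and the vectors −e_i and θ^{−1}·e_i for i ∈ P_+, where e_1,…,e_n are the standard basis vectors of ℝ^n. -/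
open Finset

theorem stmt17 {n : ℕ} (hn : 0 < n) (Pplus : Finset (Fin n)) (θ : ℝ) (hθ : 1 ≤ θ) :
    {x : Fin n → ℝ |
        ∑ i ∈ Pplus, max (-x i) (θ * x i) + ∑ i ∈ Pplusᶜ, |x i| ≤ 1} =
      convexHull ℝ
        (((fun i : Fin n => (Pi.single i (1 : ℝ) : Fin n → ℝ)) '' ↑(Pplusᶜ : Finset (Fin n))) ∪
          ((fun i : Fin n => -(Pi.single i (1 : ℝ) : Fin n → ℝ)) '' ↑(Pplusᶜ : Finset (Fin n))) ∪
          ((fun i : Fin n => -(Pi.single i (1 : ℝ) : Fin n → ℝ)) '' ↑Pplus) ∪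
          ((fun i : Fin n => θ⁻¹ • (Pi.single i (1 : ℝ) : Fin n → ℝ)) '' ↑Pplus)) := by
  have hθ0 : (0:ℝ) < θ := lt_of_lt_of_le one_pos hθ
  set c : Fin n → ℝ := fun i => if i ∈ Pplus then θ else 1 with hc
  have hc1 : ∀ i, 1 ≤ c i := by
    intro i; simp only [hc]; split <;> [exact hθ; exact le_refl 1]
  have hc0 : ∀ i, 0 < c i := fun i => lt_of_lt_of_le one_pos (hc1 i)
  have hmaxsub : ∀ a : ℝ, max a 0 - max (-a) 0 = a := fun a => by
    rcases le_total a 0 with h | h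
    · rw [max_eq_right h, max_eq_left (by linarith)]; ring
    · rw [max_eq_left h, max_eq_right (by linarith)]; ring
  have hkey : ∀ (a t : ℝ), 1 ≤ t → t * max a 0 + max (-a) 0 = max (-a) (t * a) := by
    intro a t ht
    rcases le_total a 0 with h | h
    · rw [max_eq_right h, max_eq_left (by linarith), max_eq_left (by nlinarith)]; ring
    · rw [max_eq_left h, max_eq_right (by linarith), max_eq_right (by nlinarith)]; ring
  have hg : ∀ x : Fin n → ℝ,
      ∑ i ∈ Pplus, max (-x i) (θ * x i) + ∑ i ∈ Pplusᶜ, |x i|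
        = ∑ i, max (-(x i)) (c i * x i) := by
    intro x
    rw [← Finset.sum_add_sum_compl Pplus (fun i => max (-(x i)) (c i * x i))]
    congr 1
    · exact Finset.sum_congr rfl (fun i hi => by simp [hc, hi])
    · refine Finset.sum_congr rfl (fun i hi => ?_)
      have hi' : i ∉ Pplus := Finset.mem_compl.mp hi
      rcases le_total (x i) 0 with h | h
      · rw [abs_of_nonpos h, max_eq_left (by simp [hc, hi']; linarith)]
      · rw [abs_of_nonneg h, max_eq_right (by simp [hc, hi']; linarith)]
        simp [hc, hi']
  have hsum1 : ∀ (j : Fin n) (r : ℝ) (v : Fin n → ℝ),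
      (∀ i, v i = r * (Pi.single j (1:ℝ) : Fin n → ℝ) i) →
      ∑ i, max (-(v i)) (c i * v i) = max (-r) (c j * r) := by
    intro j r v hv
    rw [Finset.sum_eq_single_of_mem j (Finset.mem_univ j)]
    · simp [hv j, Pi.single_apply]
    · intro i _ hij
      simp [hv i, Pi.single_apply, hij]
  apply Set.Subset.antisymm
  · -- set ⊆ hull
    intro x hx
    simp only [Set.mem_setOf_eq] at hx
    rw [hg] at hx
    set F := ∑ i, max (-(x i)) (c i * x i) with hF
    have hmax0 : ∀ i, (0:ℝ) ≤ max (-(x i)) (c i * x i) := fun i => by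
      rcases le_total (x i) 0 with h | h
      · exact le_max_of_le_left (by linarith)
      · exact le_max_of_le_right (mul_nonneg (hc0 i).le h)
    have hF0 : 0 ≤ F := Finset.sum_nonneg fun i _ => hmax0 i
    have hδ : 0 ≤ 1 - F := by linarith
    set i0 : Fin n := ⟨0, hn⟩ with hi0
    have hd : (0:ℝ) < 1 + c i0 := by have := hc0 i0; linarith
    set W : Fin n ⊕ Fin n → ℝ := Sum.elim
      (fun i => c i * max (x i) 0 + (if i = i0 then (1 - F) * c i0 / (1 + c i0) else 0))
      (fun i => max (-(x i)) 0 + (if i = i0 then (1 - F) / (1 + c i0) else 0)) with hW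
    set Z : Fin n ⊕ Fin n → (Fin n → ℝ) := Sum.elim
      (fun i => (c i)⁻¹ • (Pi.single i (1:ℝ) : Fin n → ℝ))
      (fun i => -(Pi.single i (1:ℝ) : Fin n → ℝ)) with hZ
    have hW0 : ∀ p ∈ (Finset.univ : Finset (Fin n ⊕ Fin n)), 0 ≤ W p := by
      rintro (i | i) -
      · refine add_nonneg (mul_nonneg (hc0 i).le (le_max_right _ _)) ?_
        split
        · exact div_nonneg (mul_nonneg hδ (hc0 i0).le) hd.le
        · exact le_refl 0
      · refine add_nonneg (le_max_right _ _) ?_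
        split
        · exact div_nonneg hδ hd.le
        · exact le_refl 0
    have hWsum : ∑ p : Fin n ⊕ Fin n, W p = 1 := by
      rw [Fintype.sum_sum_type]
      simp only [hW, Sum.elim_inl, Sum.elim_inr]
      rw [Finset.sum_add_distrib, Finset.sum_add_distrib,
        Finset.sum_ite_eq' Finset.univ i0 (fun _ => (1 - F) * c i0 / (1 + c i0)),
        Finset.sum_ite_eq' Finset.univ i0 (fun _ => (1 - F) / (1 + c i0))]
      simp only [Finset.mem_univ, if_pos]
      have h1 : ∑ i, c i * max (x i) 0 + ∑ i, max (-(x i)) 0 = F := by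
        rw [hF, ← Finset.sum_add_distrib]
        exact Finset.sum_congr rfl fun i _ => hkey (x i) (c i) (hc1 i)
      have h2 : (1 - F) * c i0 / (1 + c i0) + (1 - F) / (1 + c i0) = 1 - F := by
        field_simp
        ring
      linarith
    have hxcm : Finset.univ.centerMass W Z = x := by
      rw [Finset.centerMass_eq_of_sum_1 _ _ hWsum]
      funext j
      rw [Finset.sum_apply]
      rw [Fintype.sum_sum_type]
      simp only [hW, hZ, Sum.elim_inl, Sum.elim_inr, Pi.smul_apply, smul_eq_mul,
        Pi.neg_apply, Pi.single_apply, mul_ite, mul_one, mul_zero, mul_neg, neg_zero]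
      rw [Finset.sum_ite_eq Finset.univ j, Finset.sum_neg_distrib,
        Finset.sum_ite_eq Finset.univ j]
      simp only [Finset.mem_univ, if_pos]
      have hcj := (hc0 j).ne'
      by_cases hji : j = i0
      · rw [if_pos hji, if_pos hji, hji]
        have hne : (1 + c i0) ≠ 0 := hd.ne'
        have hcne : c i0 ≠ 0 := (hc0 i0).ne'
        have e1 : (c i0 * max (x i0) 0 + (1 - F) * c i0 / (1 + c i0)) * (c i0)⁻¹
            = max (x i0) 0 + (1 - F) / (1 + c i0) := by
          field_simp
        rw [e1]
        linarith [hmaxsub (x i0)]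
      · rw [if_neg hji, if_neg hji, add_zero, add_zero]
        have e1 : c j * max (x j) 0 * (c j)⁻¹ = max (x j) 0 := by
          field_simp
        rw [e1]
        linarith [hmaxsub (x j)]
    have hZmem : ∀ p ∈ (Finset.univ : Finset (Fin n ⊕ Fin n)), Z p ∈
        (((fun i : Fin n => (Pi.single i (1 : ℝ) : Fin n → ℝ)) '' ↑(Pplusᶜ : Finset (Fin n))) ∪
          ((fun i : Fin n => -(Pi.single i (1 : ℝ) : Fin n → ℝ)) '' ↑(Pplusᶜ : Finset (Fin n))) ∪
          ((fun i : Fin n => -(Pi.single i (1 : ℝ) : Fin n → ℝ)) '' ↑Pplus) ∪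
          ((fun i : Fin n => θ⁻¹ • (Pi.single i (1 : ℝ) : Fin n → ℝ)) '' ↑Pplus)) := by
      rintro (i | i) -
      · by_cases hi : i ∈ Pplus
        · exact Or.inr ⟨i, by simpa using hi, by simp [hZ, hc, hi]⟩
        · exact Or.inl (Or.inl (Or.inl ⟨i, by simpa using hi, by simp [hZ, hc, hi]⟩))
      · by_cases hi : i ∈ Pplus
        · exact Or.inl (Or.inr ⟨i, by simpa using hi, by simp [hZ]⟩)
        · exact Or.inl (Or.inl (Or.inr ⟨i, by simpa using hi, by simp [hZ]⟩))
    rw [← hxcm]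
    exact Finset.centerMass_mem_convexHull _ hW0 (by rw [hWsum]; norm_num) hZmem
  · -- hull ⊆ set
    apply convexHull_min
    · rintro v (((⟨j, hj, rfl⟩ | ⟨j, hj, rfl⟩) | ⟨j, hj, rfl⟩) | ⟨j, hj, rfl⟩)
      · have hj' : j ∉ Pplus := by simpa using hj
        simp only [Set.mem_setOf_eq]
        rw [hg, hsum1 j 1 _ (fun i => by simp)]
        simp [hc, hj']
      · have hj' : j ∉ Pplus := by simpa using hj
        simp only [Set.mem_setOf_eq]
        rw [hg, hsum1 j (-1) _ (fun i => by simp)]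
        simp only [neg_neg]
        rw [max_eq_left (by nlinarith [hc0 j])]
      · have hj' : j ∈ Pplus := by simpa using hj
        simp only [Set.mem_setOf_eq]
        rw [hg, hsum1 j (-1) _ (fun i => by simp)]
        simp only [neg_neg]
        rw [max_eq_left (by nlinarith [hc0 j])]
      · have hj' : j ∈ Pplus := by simpa using hj
        simp only [Set.mem_setOf_eq]
        rw [hg, hsum1 j θ⁻¹ _ (fun i => by simp [Pi.smul_apply, smul_eq_mul])]
        have hcθ : c j = θ := by simp [hc, hj']
        rw [hcθ, mul_inv_cancel₀ hθ0.ne']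
        rw [max_eq_right (by nlinarith [inv_pos.mpr hθ0])]
    · intro x hx y hy a b ha hb hab
      simp only [Set.mem_setOf_eq] at hx hy ⊢
      rw [hg] at hx hy ⊢
      have step : ∑ i, max (-((a • x + b • y) i)) (c i * (a • x + b • y) i)
          ≤ ∑ i, (a * max (-(x i)) (c i * x i) + b * max (-(y i)) (c i * y i)) := by
        refine Finset.sum_le_sum fun i _ => ?_
        have h1 := le_max_left (-(x i)) (c i * x i)
        have h2 := le_max_right (-(x i)) (c i * x i)
        have h3 := le_max_left (-(y i)) (c i * y i)
        have h4 := le_max_right (-(y i)) (c i * y i)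
        simp only [Pi.add_apply, Pi.smul_apply, smul_eq_mul]
        apply max_le
        · nlinarith
        · nlinarith
      have step2 : ∑ i, (a * max (-(x i)) (c i * x i) + b * max (-(y i)) (c i * y i))
          = a * ∑ i, max (-(x i)) (c i * x i) + b * ∑ i, max (-(y i)) (c i * y i) := by
        rw [Finset.sum_add_distrib, Finset.mul_sum, Finset.mul_sum]
      nlinarith
end
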